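/- arXiv:1701.06404 — 6 statements merged into one kernel-verified Lean document; each statement's English description precedes it below -/
import Mathlib

section
/- A finite simple connected graph G is sequentially distance preserving if and only if G admits a weakly 4-simplicial ordering, i.e., an ordering v_1, …, v_n of V(G) such that for every i, the vertex v_i is weakly 4-simplicial in the subgraph induced on {v_i, …, v_n}. -/
open SimpleGraph

/-- `G[A]` is an isometric subgraph of `G`: it is connected and distances
within `G[A]` agree with distances in `G`. -/
def IsIsomSub {V : Type*} (G : SimpleGraph V) (A : Set V) : Prop :=
  (G.induce A).Connected ∧
    ∀ u v : A, (G.induce A).dist u v = G.dist (u : V) (v : V)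

/-- `G` is sequentially distance preserving: there is an ordering
`v_1, …, v_n` of the vertices (given by `e`, where `v_{j+1} = e j`) such that
for every `i ≥ 1` deleting the first `i` vertices leaves an isometric
subgraph. -/
def SeqDistPres {V : Type*} [Fintype V] (G : SimpleGraph V) : Prop :=
  ∃ e : Fin (Fintype.card V) ≃ V,
    ∀ i : ℕ, 1 ≤ i → i < Fintype.card V →
      IsIsomSub G {v : V | ∃ j : Fin (Fintype.card V), i ≤ (j : ℕ) ∧ e j = v}

/-- A vertex `v` of a graph `H` is weakly 4-simplicial if every pair of
neighbours of `v` in `H` is at distance at most `2` in `H − v` (i.e. they are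
joined in `H − v` by a walk of length at most `2`). -/
def Weakly4Simplicial {W : Type*} (H : SimpleGraph W) (v : W) : Prop :=
  ∀ (x y : W) (hx : H.Adj v x) (hy : H.Adj v y),
    ∃ w : (H.induce {u : W | u ≠ v}).Walk ⟨x, hx.ne'⟩ ⟨y, hy.ne'⟩, w.length ≤ 2

section Aux

variable {V : Type*} {G : SimpleGraph V}

/-- inclusion hom from an induced subgraph -/
def inclHom (G : SimpleGraph V) (A : Set V) : G.induce A →g G :=
  ⟨Subtype.val, fun h => h⟩

lemma dist_le_of_induce {A : Set V} {x y : A} (h : (G.induce A).Reachable x y) :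
    G.dist (x : V) (y : V) ≤ (G.induce A).dist x y := by
  obtain ⟨p, -, hp⟩ := h.exists_path_of_dist
  calc G.dist (x : V) (y : V) ≤ (p.map (inclHom G A)).length := SimpleGraph.dist_le _
    _ = _ := by rw [SimpleGraph.Walk.length_map, hp]

/-- iso between the double induced subgraph and the induced subgraph on `A \ {v}` -/
def isoAux (G : SimpleGraph V) {A : Set V} {v : V} (hv : v ∈ A) :
    ((G.induce A).induce {u : A | u ≠ ⟨v, hv⟩}) ≃g G.induce (A \ {v}) where
  toFun x := ⟨x.1.1, x.1.2, fun h => x.2 (Subtype.ext h)⟩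
  invFun y := ⟨⟨y.1, y.2.1⟩, fun h => y.2.2 (congrArg Subtype.val h)⟩
  left_inv x := rfl
  right_inv y := rfl
  map_rel_iff' := Iff.rfl

lemma walk_avoid_aux {W : Type*} {H : SimpleGraph W} {v : W}
    (hv : Weakly4Simplicial H v) :
    ∀ (n : ℕ) (x y : W) (hx : x ≠ v) (hy : y ≠ v) (w : H.Walk x y), w.length ≤ n →
      ∃ w' : (H.induce {u : W | u ≠ v}).Walk ⟨x, hx⟩ ⟨y, hy⟩, w'.length ≤ w.length := by
  intro n
  induction n with
  | zero =>
    intro x y hx hy w hw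
    cases w with
    | nil => exact ⟨SimpleGraph.Walk.nil, by simp⟩
    | cons h w' => simp at hw
  | succ n ih =>
    intro x y hx hy w hw
    cases w with
    | nil => exact ⟨SimpleGraph.Walk.nil, by simp⟩
    | @cons _ z _ h w' =>
      by_cases hz : z = v
      · subst hz
        cases w' with
        | nil => exact absurd rfl hy
        | @cons _ b _ h2 w'' =>
          obtain ⟨q, hq⟩ := hv x b h.symm h2
          have hlen : w''.length ≤ n := by
            simp [SimpleGraph.Walk.length_cons] at hw; omega
          obtain ⟨r, hr⟩ := ih b y h2.ne' hy w'' hlen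
          refine ⟨q.append r, ?_⟩
          rw [SimpleGraph.Walk.length_append]
          simp [SimpleGraph.Walk.length_cons]
          omega
      · have hlen : w'.length ≤ n := by
          simp [SimpleGraph.Walk.length_cons] at hw; omega
        obtain ⟨r, hr⟩ := ih z y hz hy w' hlen
        refine ⟨SimpleGraph.Walk.cons (by exact h) r, ?_⟩
        simp [SimpleGraph.Walk.length_cons]
        exact Nat.succ_le_succ hr

lemma isom_step {A : Set V} {v : V} (hv : v ∈ A)
    (hiso : IsIsomSub G A) (hne : (A \ {v}).Nonempty)
    (h4 : Weakly4Simplicial (G.induce A) ⟨v, hv⟩) :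
    IsIsomSub G (A \ {v}) := by
  have key : ∀ x y : ↥(A \ {v}), ∃ w : (G.induce (A \ {v})).Walk x y,
      w.length ≤ G.dist (x : V) (y : V) := by
    intro x y
    obtain ⟨p, -, hp⟩ := hiso.1.exists_path_of_dist ⟨x.1, x.2.1⟩ ⟨y.1, y.2.1⟩
    have hx' : (⟨x.1, x.2.1⟩ : A) ≠ ⟨v, hv⟩ := fun h => x.2.2 (congrArg Subtype.val h)
    have hy' : (⟨y.1, y.2.1⟩ : A) ≠ ⟨v, hv⟩ := fun h => y.2.2 (congrArg Subtype.val h)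
    obtain ⟨q, hq⟩ := walk_avoid_aux h4 p.length _ _ hx' hy' p le_rfl
    refine ⟨q.map (isoAux G hv).toHom, ?_⟩
    refine (SimpleGraph.Walk.length_map _ _).trans_le ?_
    calc q.length ≤ p.length := hq
      _ = _ := by rw [hp, hiso.2]
  have hpre : (G.induce (A \ {v})).Preconnected := fun x y => (key x y).choose.reachable
  haveI := hne.to_subtype
  have hconn : (G.induce (A \ {v})).Connected := SimpleGraph.Connected.mk hpre
  refine ⟨hconn, fun x y => le_antisymm ?_ (dist_le_of_induce (hpre x y))⟩
  obtain ⟨w, hw⟩ := key x y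
  exact le_trans (SimpleGraph.dist_le w) hw

lemma isom_univ (hG : G.Connected) : IsIsomSub G (Set.univ : Set V) := by
  have hpre : (G.induce (Set.univ : Set V)).Preconnected := by
    intro x y
    obtain ⟨p⟩ := hG x.1 y.1
    exact ⟨(p.map (G.induceUnivIso).symm.toHom).copy (Subtype.ext rfl) (Subtype.ext rfl)⟩
  haveI : Nonempty (Set.univ : Set V) := ⟨⟨hG.nonempty.some, trivial⟩⟩
  have hconn : (G.induce (Set.univ : Set V)).Connected := SimpleGraph.Connected.mk hpre
  refine ⟨hconn, fun x y => le_antisymm ?_ (dist_le_of_induce (hpre x y))⟩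
  obtain ⟨p, -, hp⟩ := hG.exists_path_of_dist x.1 y.1
  calc (G.induce Set.univ).dist x y
      ≤ ((p.map (G.induceUnivIso).symm.toHom).copy (Subtype.ext rfl) (Subtype.ext rfl)).length :=
        SimpleGraph.dist_le _
    _ = G.dist x.1 y.1 := by rw [SimpleGraph.Walk.length_copy, SimpleGraph.Walk.length_map, hp]

end Aux


/-- A finite simple connected graph is sequentially distance preserving if and
only if it admits a weakly 4-simplicial ordering, i.e. an ordering
`v_1, …, v_n` of the vertices such that every `v_i` is weakly 4-simplicial in
the subgraph induced on `{v_i, …, v_n}`. -/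
theorem sdp_iff_weakly_four_simplicial_ordering {V : Type*} [Fintype V]
    (G : SimpleGraph V) (hG : G.Connected) :
    SeqDistPres G ↔
      ∃ e : Fin (Fintype.card V) ≃ V,
        ∀ i : Fin (Fintype.card V),
          Weakly4Simplicial
            (G.induce {v : V | ∃ j : Fin (Fintype.card V), (i : ℕ) ≤ (j : ℕ) ∧ e j = v})
            ⟨e i, ⟨i, le_refl _, rfl⟩⟩ := by
  set n := Fintype.card V with hn
  constructor
  · rintro ⟨e, he⟩
    refine ⟨e, fun i => ?_⟩
    set A : Set V := {v : V | ∃ j : Fin n, (i : ℕ) ≤ (j : ℕ) ∧ e j = v} with hA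
    intro x y hx hy
    -- x y : ↥A, hx : (G.induce A).Adj ⟨e i, _⟩ x
    have hxadj : G.Adj (e i) x.1 := hx
    have hyadj : G.Adj (e i) y.1 := hy
    by_cases hlast : (i : ℕ) + 1 < n
    · have hiso := he ((i : ℕ) + 1) (Nat.le_add_left 1 i) hlast
      set B : Set V := {v : V | ∃ j : Fin n, (i : ℕ) + 1 ≤ (j : ℕ) ∧ e j = v} with hB
      have hAB : A \ {e i} = B := by
        ext w
        constructor
        · rintro ⟨⟨j, hji, rfl⟩, hwv⟩
          refine ⟨j, ?_, rfl⟩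
          rcases Nat.lt_or_ge (i : ℕ) (j : ℕ) with h | h
          · omega
          · exfalso; apply hwv
            have : j = i := Fin.ext (le_antisymm h hji)
            simp [this]
        · rintro ⟨j, hji, rfl⟩
          refine ⟨⟨j, by omega, rfl⟩, fun hh => ?_⟩
          have : j = i := e.injective (by simpa using hh)
          omega
      rw [← hAB] at hiso
      -- x.1 y.1 ∈ A \ {e i}
      have hxmem : x.1 ∈ A \ {e i} := ⟨x.2, hxadj.ne'⟩
      have hymem : y.1 ∈ A \ {e i} := ⟨y.2, hyadj.ne'⟩
      have hdist2 : G.dist x.1 y.1 ≤ 2 :=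
        le_trans (SimpleGraph.dist_le (SimpleGraph.Walk.cons hxadj.symm
          (SimpleGraph.Walk.cons hyadj SimpleGraph.Walk.nil))) (by simp)
      obtain ⟨p, hp⟩ := (hiso.1.preconnected ⟨x.1, hxmem⟩ ⟨y.1, hymem⟩).exists_walk_length_eq_dist
      have hplen : p.length ≤ 2 := by
        rw [hp, hiso.2]; exact hdist2
      refine ⟨(p.map (isoAux G (show e i ∈ A from ⟨i, le_refl _, rfl⟩)).symm.toHom).copy
        ?_ ?_, ?_⟩
      · exact Subtype.ext (Subtype.ext rfl)
      · exact Subtype.ext (Subtype.ext rfl)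
      · rw [SimpleGraph.Walk.length_copy, SimpleGraph.Walk.length_map]; exact hplen
    · -- A = {e i}, so x = e i contradicting adjacency
      exfalso
      obtain ⟨j, hji, hjx⟩ := x.2
      have hj : (j : ℕ) = (i : ℕ) := by have := j.2; omega
      have : x.1 = e i := by rw [← hjx]; congr 1; exact Fin.ext hj
      exact hxadj.ne this.symm
  · rintro ⟨e, he⟩
    refine ⟨e, ?_⟩
    have main : ∀ i : ℕ, i < n →
        IsIsomSub G {v : V | ∃ j : Fin n, i ≤ (j : ℕ) ∧ e j = v} := by
      intro i
      induction i with
      | zero =>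
        intro _
        have : {v : V | ∃ j : Fin n, 0 ≤ (j : ℕ) ∧ e j = v} = Set.univ := by
          ext w; simp only [Set.mem_setOf_eq, Set.mem_univ, iff_true]
          exact ⟨e.symm w, Nat.zero_le _, e.apply_symm_apply w⟩
        rw [this]; exact isom_univ hG
      | succ i ih =>
        intro hi1
        have hi : i < n := by omega
        set A : Set V := {v : V | ∃ j : Fin n, i ≤ (j : ℕ) ∧ e j = v} with hA
        have hvA : e ⟨i, hi⟩ ∈ A := ⟨⟨i, hi⟩, le_refl _, rfl⟩
        have hAB : A \ {e ⟨i, hi⟩} = {v : V | ∃ j : Fin n, i + 1 ≤ (j : ℕ) ∧ e j = v} := by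
          ext w
          constructor
          · rintro ⟨⟨j, hji, rfl⟩, hwv⟩
            refine ⟨j, ?_, rfl⟩
            rcases Nat.lt_or_ge i (j : ℕ) with h | h
            · omega
            · exfalso; apply hwv
              have : j = ⟨i, hi⟩ := Fin.ext (le_antisymm h hji)
              simp [this]
          · rintro ⟨j, hji, rfl⟩
            refine ⟨⟨j, by omega, rfl⟩, fun hh => ?_⟩
            have : j = ⟨i, hi⟩ := e.injective (by simpa using hh)
            have := congrArg Fin.val this
            simp at this; omega
        rw [← hAB]
        have hne : (A \ {e ⟨i, hi⟩}).Nonempty := by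
          rw [hAB]
          exact ⟨e ⟨i + 1, hi1⟩, ⟨i + 1, hi1⟩, le_refl _, rfl⟩
        exact isom_step hvA (ih hi) hne (he ⟨i, hi⟩)
    intro i h1 h2
    exact main i h2
end

section
/- Let G and H be finite simple connected graphs whose vertex sets intersect in exactly one vertex x, and let G +_x H denote their union. Then dp(G +_x H) = {a + b − 1 : a ∈ dp^x(G), b ∈ dp^x(H)} ∪ dp_x(G) ∪ dp_x(H), where for a graph K and vertex x, dp^x(K) denotes the set of cardinalities |A| over all A ⊆ V(K) with x ∈ A such that K[A] is an isometric subgraph of K, dp_x(K) denotes the set of cardinalities |A| over all nonempty A ⊆ V(K) with x ∉ A such that K[A] is an isometric subgraph of K, and dp(K) denotes the set of cardinalities |A| over all nonempty A ⊆ V(K) such that K[A] is an isometric subgraph of K. -/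
open SimpleGraph

/-- `dp(K)`: the set of cardinalities of (nonempty) isometric subgraphs of `K`. -/
def dpAll {V : Type*} (K : SimpleGraph V) : Set ℕ :=
  {n : ℕ | ∃ A : Set V, A.Nonempty ∧ A.ncard = n ∧ IsIsomSub K A}

/-- `dp^x(K)`: the set of cardinalities of isometric subgraphs of `K`
containing the vertex `x`. -/
def dpIn {V : Type*} (K : SimpleGraph V) (x : V) : Set ℕ :=
  {n : ℕ | ∃ A : Set V, x ∈ A ∧ A.ncard = n ∧ IsIsomSub K A}

/-- `dp_x(K)`: the set of cardinalities of nonempty isometric subgraphs of `K`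
avoiding the vertex `x`. -/
def dpOut {V : Type*} (K : SimpleGraph V) (x : V) : Set ℕ :=
  {n : ℕ | ∃ A : Set V, A.Nonempty ∧ x ∉ A ∧ A.ncard = n ∧ IsIsomSub K A}

namespace DPAux

variable {V : Type*}

/-- Inclusion homomorphism between induced subgraphs. -/
def incl (K : SimpleGraph V) {s t : Set V} (h : s ⊆ t) : K.induce s →g K.induce t where
  toFun := fun a => ⟨a.1, h a.2⟩
  map_rel' := fun hadj => hadj

/-- The homomorphism from an induced subgraph to the ambient graph. -/
def out (K : SimpleGraph V) (s : Set V) : K.induce s →g K where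
  toFun := Subtype.val
  map_rel' := fun hadj => hadj

lemma image_subset_of_mem {s : Set V} (B : Set s) : Subtype.val '' B ⊆ s := by
  rintro _ ⟨b, _, rfl⟩; exact b.2

/-- Isomorphism between a doubly induced subgraph and the induced subgraph on the image. -/
def iso2 (K : SimpleGraph V) (s : Set V) (B : Set s) :
    (K.induce s).induce B ≃g K.induce (Subtype.val '' B) where
  toFun := fun a => ⟨(a.1 : V), ⟨a.1, a.2, rfl⟩⟩
  invFun := fun a => ⟨⟨a.1, image_subset_of_mem B a.2⟩, by
    obtain ⟨b, hb, hba⟩ := a.2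
    have : b = ⟨a.1, image_subset_of_mem B a.2⟩ := Subtype.ext hba
    exact this ▸ hb⟩
  left_inv := fun a => by ext; rfl
  right_inv := fun a => by ext; rfl
  map_rel_iff' := Iff.rfl

/-- Graph isomorphisms preserve distances. -/
lemma iso_dist {W : Type*} {G : SimpleGraph V} {G' : SimpleGraph W} (e : G ≃g G') (u v : V) :
    G'.dist (e u) (e v) = G.dist u v := by
  by_cases h : G.Reachable u v
  · apply le_antisymm
    · obtain ⟨p, hp⟩ := h.exists_walk_length_eq_dist
      calc G'.dist (e u) (e v) ≤ (p.map e.toHom).length := dist_le _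
        _ = G.dist u v := by rw [Walk.length_map, hp]
    · have h' : G'.Reachable (e u) (e v) := h.map e.toHom
      obtain ⟨p, hp⟩ := h'.exists_walk_length_eq_dist
      have := dist_le ((p.map e.symm.toHom).copy (e.symm_apply_apply u) (e.symm_apply_apply v))
      simp only [Walk.length_copy, Walk.length_map] at this
      omega
  · rw [dist_eq_zero_of_not_reachable h, dist_eq_zero_of_not_reachable]
    intro h'
    exact h (Iso.reachable_iff.mp h')

/-- Any walk from outside `P` into `P` has a crossing edge. -/
lemma exists_cross_edge {W : Type*} {G : SimpleGraph W} {P : W → Prop} :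
    ∀ {u v : W}, G.Walk u v → ¬ P u → P v → ∃ a b, G.Adj a b ∧ ¬ P a ∧ P b := by
  intro u v w
  induction w with
  | nil => intro hu hv; exact absurd hv hu
  | @cons a b c h p ih =>
    intro hu hv
    by_cases hb : P b
    · exact ⟨_, _, h, hu, hb⟩
    · exact ih hb hv

/-- Transfer of the isometric-subgraph property along an isometric set `s`. -/
lemma isom_iff {K : SimpleGraph V} {s : Set V}
    (hs : ∀ u v : s, (K.induce s).dist u v = K.dist (u : V) (v : V)) (B : Set s) :
    IsIsomSub (K.induce s) B ↔ IsIsomSub K (Subtype.val '' B) := by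
  set e := iso2 K s B with he
  have hco : ∀ a : B, (e a).1 = a.1.1 := fun a => rfl
  unfold IsIsomSub
  rw [← e.connected_iff]
  refine and_congr_right fun _ => ?_
  constructor
  · intro h u v
    obtain ⟨u, rfl⟩ := e.surjective u
    obtain ⟨v, rfl⟩ := e.surjective v
    rw [iso_dist e u v, h u v, hco u, hco v]
    exact hs _ _
  · intro h u v
    rw [← iso_dist e u v, h (e u) (e v), hco u, hco v]
    exact (hs u.1 v.1).symm

variable [DecidableEq V] {K : SimpleGraph V} {sG sH : Set V} {x : V}

/-- A walk entering `sG` from outside passes through `x`. -/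
lemma cross (hcap : sG ∩ sH = {x})
    (hedge : ∀ u v : V, K.Adj u v → (u ∈ sG ∧ v ∈ sG) ∨ (u ∈ sH ∧ v ∈ sH)) :
    ∀ {u v : V} (w : K.Walk u v), u ∉ sG → v ∈ sG → x ∈ w.support := by
  intro u v w
  induction w with
  | nil => intro hu hv; exact absurd hv hu
  | @cons a b c h p ih =>
    intro hu hv
    by_cases hb : b ∈ sG
    · have hbx : b = x := by
        rcases hedge a b h with ⟨ha, _⟩ | ⟨ha, hb'⟩
        · exact absurd ha hu
        · have : b ∈ sG ∩ sH := ⟨hb, hb'⟩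
          rwa [hcap] at this
      subst hbx
      simp [Walk.support_cons, Walk.start_mem_support]
    · simpa [Walk.support_cons] using Or.inr (ih hb hv)

/-- Surgery: a walk in `K` between vertices of `sG` can be replaced by a walk
inside the induced subgraph of no greater length. -/
lemma surgery (hxG : x ∈ sG) (hcap : sG ∩ sH = {x})
    (hedge : ∀ u v : V, K.Adj u v → (u ∈ sG ∧ v ∈ sG) ∨ (u ∈ sH ∧ v ∈ sH)) :
    ∀ (n : ℕ) {u v : V} (hu : u ∈ sG) (hv : v ∈ sG) (w : K.Walk u v), w.length ≤ n →
      ∃ w' : (K.induce sG).Walk ⟨u, hu⟩ ⟨v, hv⟩, w'.length ≤ w.length := by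
  intro n
  induction n with
  | zero =>
    intro u v hu hv w hw
    cases w with
    | nil => exact ⟨.nil, by simp⟩
    | cons h p => simp at hw
  | succ n ih =>
    intro u v hu hv w hw
    cases w with
    | nil => exact ⟨.nil, by simp⟩
    | @cons _ b _ h p =>
      by_cases hb : b ∈ sG
      · obtain ⟨w', hw'⟩ := ih hb hv p (by simpa using hw)
        refine ⟨.cons (by exact h : (K.induce sG).Adj ⟨u, hu⟩ ⟨b, hb⟩) w', ?_⟩
        exact Nat.add_le_add_right hw' 1
      · have hux : u = x := by
          rcases hedge u b h with ⟨_, hb'⟩ | ⟨hu', _⟩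
          · exact absurd hb' hb
          · have : u ∈ sG ∩ sH := ⟨hu, hu'⟩
            rwa [hcap, Set.mem_singleton_iff] at this
        have hxp : x ∈ p.support := cross hcap hedge p hb hv
        obtain ⟨w', hw'⟩ := ih hxG hv (p.dropUntil x hxp)
          (le_trans (Walk.length_dropUntil_le p hxp) (by simpa using hw))
        refine ⟨w'.copy (Subtype.ext hux.symm) rfl, ?_⟩
        have := Walk.length_dropUntil_le p hxp
        simp only [Walk.length_copy, Walk.length_cons]
        omega

/-- Distances in the induced subgraph on `sG` agree with distances in `K`,
and the induced subgraph is connected. -/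
lemma key (hxG : x ∈ sG) (hcap : sG ∩ sH = {x})
    (hedge : ∀ u v : V, K.Adj u v → (u ∈ sG ∧ v ∈ sG) ∨ (u ∈ sH ∧ v ∈ sH))
    (hK : K.Connected) :
    (K.induce sG).Connected ∧
      ∀ u v : sG, (K.induce sG).dist u v = K.dist (u : V) (v : V) := by
  have hreach : ∀ u v : sG,
      ∃ w' : (K.induce sG).Walk u v, w'.length ≤ K.dist (u : V) (v : V) := by
    intro u v
    obtain ⟨w, hw⟩ := hK.exists_walk_length_eq_dist (u : V) (v : V)
    obtain ⟨w', hw'⟩ := surgery hxG hcap hedge w.length u.2 v.2 w le_rfl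
    exact ⟨w'.copy (by ext; rfl) (by ext; rfl), by rw [Walk.length_copy]; omega⟩
  constructor
  · rw [connected_iff]
    exact ⟨fun u v => ⟨(hreach u v).choose⟩, ⟨⟨x, hxG⟩⟩⟩
  · intro u v
    apply le_antisymm
    · obtain ⟨w', hw'⟩ := hreach u v
      exact le_trans (dist_le w') hw'
    · obtain ⟨w', _⟩ := hreach u v
      obtain ⟨p, hp⟩ := (Reachable.exists_walk_length_eq_dist ⟨w'⟩)
      calc K.dist (u : V) (v : V) ≤ (p.map (out K sG)).length := dist_le _
        _ = (K.induce sG).dist u v := by rw [Walk.length_map, hp]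

/-- Distance from `sG` to the outside splits through `x`. -/
lemma split (hcap : sG ∩ sH = {x})
    (hedge : ∀ u v : V, K.Adj u v → (u ∈ sG ∧ v ∈ sG) ∨ (u ∈ sH ∧ v ∈ sH))
    (hK : K.Connected) {u v : V} (hu : u ∈ sG) (hv : v ∉ sG) :
    K.dist u v = K.dist u x + K.dist x v := by
  obtain ⟨w, hw⟩ := hK.exists_walk_length_eq_dist u v
  have hx : x ∈ w.support := by
    have := cross hcap hedge w.reverse hv hu
    rwa [Walk.support_reverse, List.mem_reverse] at this
  have h1 := dist_le (w.takeUntil x hx)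
  have h2 := dist_le (w.dropUntil x hx)
  have h3 : (w.takeUntil x hx).length + (w.dropUntil x hx).length = w.length := by
    have := congrArg Walk.length (w.take_spec hx)
    rwa [Walk.length_append] at this
  have h4 := hK.dist_triangle (u := u) (v := x) (w := v)
  omega

end DPAux

/-- Let `K = G +_x H` be the union of two finite simple connected graphs
`G = K[sG]` and `H = K[sH]` whose vertex sets intersect in exactly the
vertex `x`.  Then
`dp(G +_x H) = (dp^x(G) + dp^x(H) + {-1}) ∪ dp_x(G) ∪ dp_x(H)`. -/
theorem dp_of_union {V : Type*} [Fintype V] (K : SimpleGraph V)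
    (sG sH : Set V) (x : V) (hxG : x ∈ sG) (hxH : x ∈ sH)
    (hcap : sG ∩ sH = {x}) (hcup : sG ∪ sH = Set.univ)
    (hedge : ∀ u v : V, K.Adj u v → (u ∈ sG ∧ v ∈ sG) ∨ (u ∈ sH ∧ v ∈ sH))
    (hGconn : (K.induce sG).Connected) (hHconn : (K.induce sH).Connected) :
    dpAll K =
      {n : ℕ | ∃ a ∈ dpIn (K.induce sG) ⟨x, hxG⟩,
        ∃ b ∈ dpIn (K.induce sH) ⟨x, hxH⟩, n = a + b - 1}
      ∪ dpOut (K.induce sG) ⟨x, hxG⟩ ∪ dpOut (K.induce sH) ⟨x, hxH⟩ := by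
  classical
  have hcap' : sH ∩ sG = {x} := by rw [Set.inter_comm]; exact hcap
  have hedge' : ∀ u v : V, K.Adj u v → (u ∈ sH ∧ v ∈ sH) ∨ (u ∈ sG ∧ v ∈ sG) :=
    fun u v h => (hedge u v h).symm
  have hmemGH : ∀ u : V, u ∈ sG ∨ u ∈ sH := fun u => by
    have : u ∈ sG ∪ sH := by rw [hcup]; trivial
    exact this
  have hK : K.Connected := by
    rw [connected_iff_exists_forall_reachable]
    refine ⟨x, fun u => ?_⟩
    rcases hmemGH u with h | h
    · exact Reachable.map (DPAux.out K sG) (hGconn.preconnected ⟨x, hxG⟩ ⟨u, h⟩)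
    · exact Reachable.map (DPAux.out K sH) (hHconn.preconnected ⟨x, hxH⟩ ⟨u, h⟩)
  obtain ⟨hGc, hGd⟩ := DPAux.key hxG hcap hedge hK
  obtain ⟨hHc, hHd⟩ := DPAux.key hxH hcap' hedge' hK
  ext n
  simp only [dpAll, dpIn, dpOut, Set.mem_union, Set.mem_setOf_eq]
  constructor
  · rintro ⟨A, hne, rfl, hAc, hAd⟩
    by_cases hxA : x ∈ A
    · -- the union case
      left; left
      set AG : Set ↥sG := {a : ↥sG | (a : V) ∈ A} with hAGdef
      set AH : Set ↥sH := {a : ↥sH | (a : V) ∈ A} with hAHdef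
      have himgG : Subtype.val '' AG = A ∩ sG := by
        ext a
        constructor
        · rintro ⟨b, hb, rfl⟩; exact ⟨hb, b.2⟩
        · rintro ⟨h1, h2⟩; exact ⟨⟨a, h2⟩, h1, rfl⟩
      have himgH : Subtype.val '' AH = A ∩ sH := by
        ext a
        constructor
        · rintro ⟨b, hb, rfl⟩; exact ⟨hb, b.2⟩
        · rintro ⟨h1, h2⟩; exact ⟨⟨a, h2⟩, h1, rfl⟩
      have hU : (A ∩ sG) ∪ (A ∩ sH) = A := by
        rw [← Set.inter_union_distrib_left, hcup, Set.inter_univ]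
      have hI : (A ∩ sG) ∩ (A ∩ sH) = {x} := by
        have h1 : (A ∩ sG) ∩ (A ∩ sH) = A ∩ (sG ∩ sH) := by
          ext a; simp only [Set.mem_inter_iff]; tauto
        rw [h1, hcap, Set.inter_eq_right.mpr (by simpa using hxA)]
      have hcardsum : (A ∩ sG).ncard + (A ∩ sH).ncard = A.ncard + 1 := by
        have := Set.ncard_union_add_ncard_inter (A ∩ sG) (A ∩ sH)
          (Set.toFinite _) (Set.toFinite _)
        rw [hU, hI, Set.ncard_singleton] at this
        omega
      -- isometric subgraph structure at the level of A
      have hcapA : ({a : ↥A | (a : V) ∈ sG} : Set ↥A) ∩ {a : ↥A | (a : V) ∈ sH}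
          = {(⟨x, hxA⟩ : ↥A)} := by
        ext a
        simp only [Set.mem_inter_iff, Set.mem_setOf_eq, Set.mem_singleton_iff]
        constructor
        · rintro ⟨h1, h2⟩
          have : (a : V) ∈ sG ∩ sH := ⟨h1, h2⟩
          rw [hcap] at this
          exact Subtype.ext this
        · rintro rfl; exact ⟨hxG, hxH⟩
      have hcapA' : ({a : ↥A | (a : V) ∈ sH} : Set ↥A) ∩ {a : ↥A | (a : V) ∈ sG}
          = {(⟨x, hxA⟩ : ↥A)} := by rw [Set.inter_comm]; exact hcapA
      have hedgeA : ∀ u v : ↥A, (K.induce A).Adj u v →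
          ((u : V) ∈ sG ∧ (v : V) ∈ sG) ∨ ((u : V) ∈ sH ∧ (v : V) ∈ sH) :=
        fun u v h => hedge _ _ h
      have hedgeA' : ∀ u v : ↥A, (K.induce A).Adj u v →
          ((u : V) ∈ sH ∧ (v : V) ∈ sH) ∨ ((u : V) ∈ sG ∧ (v : V) ∈ sG) :=
        fun u v h => (hedgeA u v h).symm
      obtain ⟨hc1, hd1⟩ := DPAux.key (K := K.induce A) (x := (⟨x, hxA⟩ : ↥A))
        (sG := {a : ↥A | (a : V) ∈ sG}) (sH := {a : ↥A | (a : V) ∈ sH})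
        hxG hcapA hedgeA hAc
      obtain ⟨hc2, hd2⟩ := DPAux.key (K := K.induce A) (x := (⟨x, hxA⟩ : ↥A))
        (sG := {a : ↥A | (a : V) ∈ sH}) (sH := {a : ↥A | (a : V) ∈ sG})
        hxH hcapA' hedgeA' hAc
      have hIsoAGK : IsIsomSub K (A ∩ sG) := by
        have h1 := (DPAux.isom_iff hAd {a : ↥A | (a : V) ∈ sG}).mp ⟨hc1, hd1⟩
        have himg : Subtype.val '' {a : ↥A | (a : V) ∈ sG} = A ∩ sG := by
          ext a
          constructor
          · rintro ⟨b, hb, rfl⟩; exact ⟨b.2, hb⟩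
          · rintro ⟨h1, h2⟩; exact ⟨⟨a, h1⟩, h2, rfl⟩
        rwa [himg] at h1
      have hIsoAHK : IsIsomSub K (A ∩ sH) := by
        have h1 := (DPAux.isom_iff hAd {a : ↥A | (a : V) ∈ sH}).mp ⟨hc2, hd2⟩
        have himg : Subtype.val '' {a : ↥A | (a : V) ∈ sH} = A ∩ sH := by
          ext a
          constructor
          · rintro ⟨b, hb, rfl⟩; exact ⟨b.2, hb⟩
          · rintro ⟨h1, h2⟩; exact ⟨⟨a, h1⟩, h2, rfl⟩
        rwa [himg] at h1
      have hIsoAG : IsIsomSub (K.induce sG) AG := by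
        rw [DPAux.isom_iff hGd AG, himgG]; exact hIsoAGK
      have hIsoAH : IsIsomSub (K.induce sH) AH := by
        rw [DPAux.isom_iff hHd AH, himgH]; exact hIsoAHK
      have hcAG : AG.ncard = (A ∩ sG).ncard := by
        rw [← himgG, Set.ncard_image_of_injective _ Subtype.val_injective]
      have hcAH : AH.ncard = (A ∩ sH).ncard := by
        rw [← himgH, Set.ncard_image_of_injective _ Subtype.val_injective]
      refine ⟨AG.ncard, ⟨AG, hxA, rfl, hIsoAG⟩, AH.ncard, ⟨AH, hxA, rfl, hIsoAH⟩, ?_⟩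
      omega
    · -- A avoids x; it is contained in sG or sH
      have hsub : A ⊆ sG ∨ A ⊆ sH := by
        by_contra hcon
        push_neg at hcon
        obtain ⟨hnG, hnH⟩ := hcon
        obtain ⟨u, huA, husG⟩ := Set.not_subset.mp hnG
        obtain ⟨v, hvA, hvsH⟩ := Set.not_subset.mp hnH
        have hvsG : v ∈ sG := (hmemGH v).resolve_right hvsH
        obtain ⟨w⟩ := hAc.preconnected ⟨u, huA⟩ ⟨v, hvA⟩
        obtain ⟨a, b, hab, ha, hb⟩ :=
          DPAux.exists_cross_edge (P := fun a : ↥A => (a : V) ∈ sG) w husG hvsG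
        rcases hedge _ _ hab with ⟨h1, _⟩ | ⟨_, h2⟩
        · exact ha h1
        · have : (b : V) ∈ sG ∩ sH := ⟨hb, h2⟩
          rw [hcap] at this
          exact hxA (this ▸ b.2)
      rcases hsub with hsubG | hsubH
      · left; right
        set A₀ : Set ↥sG := {a : ↥sG | (a : V) ∈ A} with hA₀def
        have himg : Subtype.val '' A₀ = A := by
          ext a
          constructor
          · rintro ⟨b, hb, rfl⟩; exact hb
          · intro ha; exact ⟨⟨a, hsubG ha⟩, ha, rfl⟩
        obtain ⟨a0, ha0⟩ := hne
        refine ⟨A₀, ⟨⟨a0, hsubG ha0⟩, ha0⟩, fun h => hxA h, ?_, ?_⟩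
        · rw [← himg, Set.ncard_image_of_injective _ Subtype.val_injective]
        · rw [DPAux.isom_iff hGd A₀, himg]; exact ⟨hAc, hAd⟩
      · right
        set A₀ : Set ↥sH := {a : ↥sH | (a : V) ∈ A} with hA₀def
        have himg : Subtype.val '' A₀ = A := by
          ext a
          constructor
          · rintro ⟨b, hb, rfl⟩; exact hb
          · intro ha; exact ⟨⟨a, hsubH ha⟩, ha, rfl⟩
        obtain ⟨a0, ha0⟩ := hne
        refine ⟨A₀, ⟨⟨a0, hsubH ha0⟩, ha0⟩, fun h => hxA h, ?_, ?_⟩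
        · rw [← himg, Set.ncard_image_of_injective _ Subtype.val_injective]
        · rw [DPAux.isom_iff hHd A₀, himg]; exact ⟨hAc, hAd⟩
  · rintro ((⟨a, ⟨A₀, hxA₀, hcA₀, hIA₀⟩, b, ⟨B₀, hxB₀, hcB₀, hIB₀⟩, rfl⟩ |
      ⟨A₀, hne₀, hx₀, hcard₀, hIso₀⟩) | ⟨A₀, hne₀, hx₀, hcard₀, hIso₀⟩)
    · -- the union of an isometric subgraph of G and one of H through x
      set A1 : Set V := Subtype.val '' A₀ with hA1def
      set B1 : Set V := Subtype.val '' B₀ with hB1def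
      have hA1G : A1 ⊆ sG := DPAux.image_subset_of_mem A₀
      have hB1H : B1 ⊆ sH := DPAux.image_subset_of_mem B₀
      have hIA1 : IsIsomSub K A1 := (DPAux.isom_iff hGd A₀).mp hIA₀
      have hIB1 : IsIsomSub K B1 := (DPAux.isom_iff hHd B₀).mp hIB₀
      have hxA1 : x ∈ A1 := ⟨⟨x, hxG⟩, hxA₀, rfl⟩
      have hxB1 : x ∈ B1 := ⟨⟨x, hxH⟩, hxB₀, rfl⟩
      have hcA1 : A1.ncard = a := by
        rw [hA1def, Set.ncard_image_of_injective _ Subtype.val_injective]; exact hcA₀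
      have hcB1 : B1.ncard = b := by
        rw [hB1def, Set.ncard_image_of_injective _ Subtype.val_injective]; exact hcB₀
      set A : Set V := A1 ∪ B1 with hAdef
      have hIcap : A1 ∩ B1 = {x} := by
        apply subset_antisymm
        · rintro c ⟨h1, h2⟩
          rw [← hcap]; exact ⟨hA1G h1, hB1H h2⟩
        · simp only [Set.singleton_subset_iff]; exact ⟨hxA1, hxB1⟩
      have hcardA : A.ncard + 1 = a + b := by
        have := Set.ncard_union_add_ncard_inter A1 B1 (Set.toFinite _) (Set.toFinite _)
        rw [hIcap, Set.ncard_singleton, ← hAdef] at this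
        omega
      have ha1 : 1 ≤ a := by
        have : 0 < A₀.ncard := (Set.ncard_pos (Set.toFinite _)).mpr ⟨_, hxA₀⟩
        omega
      -- walks of optimal length inside the induced subgraph on A
      have boundG : ∀ c d : ↥A, (c : V) ∈ A1 → (d : V) ∈ A1 →
          ∃ w : (K.induce A).Walk c d, w.length = K.dist (c : V) (d : V) := by
        intro c d hc hd
        obtain ⟨p, hp⟩ := hIA1.1.exists_walk_length_eq_dist ⟨(c : V), hc⟩ ⟨(d : V), hd⟩
        refine ⟨p.map (DPAux.incl K Set.subset_union_left), ?_⟩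
        exact (Walk.length_map _ _).trans (hp.trans (hIA1.2 _ _))
      have boundH : ∀ c d : ↥A, (c : V) ∈ B1 → (d : V) ∈ B1 →
          ∃ w : (K.induce A).Walk c d, w.length = K.dist (c : V) (d : V) := by
        intro c d hc hd
        obtain ⟨p, hp⟩ := hIB1.1.exists_walk_length_eq_dist ⟨(c : V), hc⟩ ⟨(d : V), hd⟩
        refine ⟨p.map (DPAux.incl K Set.subset_union_right), ?_⟩
        exact (Walk.length_map _ _).trans (hp.trans (hIB1.2 _ _))
      have hAconn : (K.induce A).Connected := by
        rw [connected_iff_exists_forall_reachable]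
        refine ⟨⟨x, Or.inl hxA1⟩, fun c => ?_⟩
        rcases c.2 with hc | hc
        · exact ⟨(boundG ⟨x, Or.inl hxA1⟩ c hxA1 hc).choose⟩
        · exact ⟨(boundH ⟨x, Or.inl hxA1⟩ c hxB1 hc).choose⟩
      have mixed : ∀ u v : ↥A, (u : V) ∈ A1 → (v : V) ∈ B1 → (v : V) ∉ A1 →
          (K.induce A).dist u v ≤ K.dist (u : V) (v : V) := by
        intro u v hu hv hv1
        have hvsG : (v : V) ∉ sG := by
          intro h
          have : (v : V) ∈ sG ∩ sH := ⟨h, hB1H hv⟩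
          rw [hcap] at this
          exact hv1 (this ▸ hxA1)
        have hsplit := DPAux.split hcap hedge hK (hA1G hu) hvsG
        obtain ⟨w1, hw1⟩ := boundG u ⟨x, Or.inl hxA1⟩ hu hxA1
        obtain ⟨w2, hw2⟩ := boundH ⟨x, Or.inl hxA1⟩ v hxB1 hv
        calc (K.induce A).dist u v ≤ (w1.append w2).length := dist_le _
          _ = K.dist (u : V) x + K.dist x (v : V) := by
              rw [Walk.length_append, hw1, hw2]
          _ = K.dist (u : V) (v : V) := hsplit.symm
      have hAdist : ∀ u v : ↥A, (K.induce A).dist u v = K.dist (u : V) (v : V) := by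
        intro u v
        apply le_antisymm
        · rcases u.2 with hu | hu <;> rcases v.2 with hv | hv
          · obtain ⟨w, hw⟩ := boundG u v hu hv
            exact hw ▸ dist_le w
          · by_cases hv1 : (v : V) ∈ A1
            · obtain ⟨w, hw⟩ := boundG u v hu hv1
              exact hw ▸ dist_le w
            · exact mixed u v hu hv hv1
          · by_cases hu1 : (u : V) ∈ A1
            · obtain ⟨w, hw⟩ := boundG u v hu1 hv
              exact hw ▸ dist_le w
            · rw [SimpleGraph.dist_comm, SimpleGraph.dist_comm (G := K)]
              exact mixed v u hv hu hu1
          · obtain ⟨w, hw⟩ := boundH u v hu hv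
            exact hw ▸ dist_le w
        · obtain ⟨p, hp⟩ := hAconn.exists_walk_length_eq_dist u v
          calc K.dist (u : V) (v : V) ≤ (p.map (DPAux.out K A)).length := dist_le _
            _ = (K.induce A).dist u v := by rw [Walk.length_map, hp]
      exact ⟨A, ⟨x, Or.inl hxA1⟩, by simp only [hAdef] at hcardA ⊢; omega, hAconn, hAdist⟩
    · -- isometric subgraph of G avoiding x
      refine ⟨Subtype.val '' A₀, hne₀.image _, ?_, (DPAux.isom_iff hGd A₀).mp hIso₀⟩
      rw [Set.ncard_image_of_injective _ Subtype.val_injective]; exact hcard₀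
    · -- isometric subgraph of H avoiding x
      refine ⟨Subtype.val '' A₀, hne₀.image _, ?_, (DPAux.isom_iff hHd A₀).mp hIso₀⟩
      rw [Set.ncard_image_of_injective _ Subtype.val_injective]; exact hcard₀
end

section
/- Let G and H be finite simple connected graphs whose vertex sets intersect in exactly one vertex x, and let G +_x H denote their union. Then the set of cardinalities of isometric subgraphs of G +_x H whose vertex set contains x equals {a + b − 1 : a ∈ dp^x(G), b ∈ dp^x(H)}, where dp^x(K) denotes the set of cardinalities |A| over all A ⊆ V(K) with x ∈ A such that K[A] is an isometric subgraph of K. -/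
open SimpleGraph

section helpers
variable {W : Type*} {G : SimpleGraph W} {s t : Set W} {y : W}

lemma mem_support_of_crossing (hcap : s ∩ t = {y})
    (hedge : ∀ u v : W, G.Adj u v → (u ∈ s ∧ v ∈ s) ∨ (u ∈ t ∧ v ∈ t))
    {u v : W} (p : G.Walk u v) (hu : u ∉ s) (hv : v ∈ s) : y ∈ p.support := by
  cases p with
  | nil => exact absurd hv hu
  | @cons _ b _ h q =>
    rcases hedge _ _ h with ⟨has, _⟩ | ⟨_, hbt⟩
    · exact absurd has hu
    · by_cases hbs : b ∈ s
      · have hb : b = y := by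
          have hm : b ∈ s ∩ t := ⟨hbs, hbt⟩
          rwa [hcap, Set.mem_singleton_iff] at hm
        rw [Walk.support_cons]
        exact List.mem_cons_of_mem _ (hb ▸ q.start_mem_support)
      · rw [Walk.support_cons]
        exact List.mem_cons_of_mem _ (mem_support_of_crossing hcap hedge q hbs hv)

lemma exists_induce_walk_le_aux (hcap : s ∩ t = {y})
    (hedge : ∀ u v : W, G.Adj u v → (u ∈ s ∧ v ∈ s) ∨ (u ∈ t ∧ v ∈ t)) :
    ∀ (n : ℕ) {u v : W} (hu : u ∈ s) (hv : v ∈ s) (p : G.Walk u v), p.length ≤ n →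
    ∃ q : (G.induce s).Walk ⟨u, hu⟩ ⟨v, hv⟩, q.length ≤ p.length := by
  classical
  intro n
  induction n with
  | zero =>
    intro u v hu hv p hn
    cases p with
    | nil => exact ⟨.nil, le_refl _⟩
    | cons h q => simp [Walk.length_cons] at hn
  | succ n ih =>
    intro u v hu hv p hn
    cases p with
    | nil => exact ⟨.nil, le_refl _⟩
    | @cons _ b _ h q =>
      have hqn : q.length ≤ n := by
        simp only [Walk.length_cons] at hn; omega
      by_cases hbs : b ∈ s
      · obtain ⟨r, hr⟩ := ih hbs hv q hqn
        refine ⟨.cons (by simpa using h) r, ?_⟩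
        simp only [Walk.length_cons]
        omega
      · have hut : u ∈ t := by
          rcases hedge _ _ h with ⟨_, h2⟩ | ⟨h1, _⟩
          exacts [absurd h2 hbs, h1]
        have huy : u = y := by
          have hm : u ∈ s ∩ t := ⟨hu, hut⟩
          rwa [hcap, Set.mem_singleton_iff] at hm
        subst huy
        have hys : u ∈ q.support := mem_support_of_crossing hcap hedge q hbs hv
        have hd := q.length_dropUntil_le hys
        obtain ⟨r, hr⟩ := ih hu hv (q.dropUntil u hys) (le_trans hd hqn)
        refine ⟨r, ?_⟩
        simp only [Walk.length_cons]
        omega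

lemma exists_induce_walk_le (hcap : s ∩ t = {y})
    (hedge : ∀ u v : W, G.Adj u v → (u ∈ s ∧ v ∈ s) ∨ (u ∈ t ∧ v ∈ t))
    {u v : W} (hu : u ∈ s) (hv : v ∈ s) (p : G.Walk u v) :
    ∃ q : (G.induce s).Walk ⟨u, hu⟩ ⟨v, hv⟩, q.length ≤ p.length :=
  exists_induce_walk_le_aux hcap hedge p.length hu hv p le_rfl

lemma reach_induce (hcap : s ∩ t = {y})
    (hedge : ∀ u v : W, G.Adj u v → (u ∈ s ∧ v ∈ s) ∨ (u ∈ t ∧ v ∈ t))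
    (hpre : G.Preconnected) {u v : W} (hu : u ∈ s) (hv : v ∈ s) :
    (G.induce s).Reachable ⟨u, hu⟩ ⟨v, hv⟩ := by
  obtain ⟨p⟩ := hpre u v
  obtain ⟨q, -⟩ := exists_induce_walk_le hcap hedge hu hv p
  exact ⟨q⟩

lemma dist_induce (hcap : s ∩ t = {y})
    (hedge : ∀ u v : W, G.Adj u v → (u ∈ s ∧ v ∈ s) ∨ (u ∈ t ∧ v ∈ t))
    (hpre : G.Preconnected) (a b : ↥s) :
    (G.induce s).dist a b = G.dist ↑a ↑b := by
  apply le_antisymm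
  · obtain ⟨p, hp⟩ := (hpre ↑a ↑b).exists_walk_length_eq_dist
    obtain ⟨q, hq⟩ := exists_induce_walk_le hcap hedge a.2 b.2 p
    exact (dist_le q).trans (hq.trans_eq hp)
  · obtain ⟨q, hq⟩ :=
      (reach_induce hcap hedge hpre a.2 b.2).exists_walk_length_eq_dist
    calc G.dist ↑a ↑b ≤ (q.map (Embedding.induce s).toHom).length := dist_le _
      _ = q.length := Walk.length_map _ _
      _ = _ := hq

lemma dist_cross (hcap : s ∩ t = {y})
    (hedge : ∀ u v : W, G.Adj u v → (u ∈ s ∧ v ∈ s) ∨ (u ∈ t ∧ v ∈ t))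
    (hpre : G.Preconnected) {u v : W} (hu : u ∈ s) (hv : v ∈ t) :
    G.dist u v = G.dist u y + G.dist y v := by
  by_cases hvs : v ∈ s
  · have hvy : v = y := by
      have hm : v ∈ s ∩ t := ⟨hvs, hv⟩
      rwa [hcap, Set.mem_singleton_iff] at hm
    subst hvy; simp
  · classical
    apply le_antisymm
    · haveI : Nonempty W := ⟨u⟩
      exact Connected.dist_triangle ⟨hpre⟩
    · obtain ⟨p, hp⟩ := (hpre u v).exists_walk_length_eq_dist
      have hys : y ∈ p.support := by
        have h' := mem_support_of_crossing hcap hedge p.reverse hvs hu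
        rwa [Walk.support_reverse, List.mem_reverse] at h'
      calc G.dist u y + G.dist y v
          ≤ (p.takeUntil y hys).length + (p.dropUntil y hys).length :=
            Nat.add_le_add (dist_le _) (dist_le _)
        _ = p.length := by rw [← Walk.length_append, p.take_spec hys]
        _ = G.dist u v := hp

end helpers

section isos
variable {W : Type*} {W' : Type*} {G : SimpleGraph W} {G' : SimpleGraph W'}

lemma iso_dist (φ : G ≃g G') (u v : W) : G'.dist (φ u) (φ v) = G.dist u v := by
  by_cases h : G.Reachable u v
  · apply le_antisymm
    · obtain ⟨p, hp⟩ := h.exists_walk_length_eq_dist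
      exact (dist_le (p.map φ.toHom)).trans (by rw [Walk.length_map, hp])
    · obtain ⟨q, hq⟩ := (Iso.reachable_iff.mpr h :
        G'.Reachable (φ u) (φ v)).exists_walk_length_eq_dist
      have := dist_le ((q.map φ.symm.toHom).copy
        (φ.symm_apply_apply u) (φ.symm_apply_apply v))
      rw [Walk.length_copy, Walk.length_map, hq] at this
      exact this
  · rw [dist_eq_zero_of_not_reachable h,
      dist_eq_zero_of_not_reachable (fun h' => h (Iso.reachable_iff.mp h'))]

lemma iso_connected (φ : G ≃g G') (h : G.Connected) : G'.Connected :=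
  h.map φ.toHom φ.toEquiv.surjective

/-- iso between a doubly-induced subgraph and the induced subgraph on the image. -/
noncomputable def doubleInduceIso (G : SimpleGraph W) (s : Set W) (B : Set ↥s) :
    (G.induce s).induce B ≃g G.induce (Subtype.val '' B) where
  toEquiv := Equiv.Set.image Subtype.val B Subtype.val_injective
  map_rel_iff' := Iff.rfl

lemma doubleInduceIso_val (G : SimpleGraph W) (s : Set W) (B : Set ↥s)
    (b : ↥(Subtype.val '' B)) :
    ((((doubleInduceIso G s B).symm b : ↥B) : ↥s) : W) = (b : W) := by
  have h := (doubleInduceIso G s B).toEquiv.apply_symm_apply b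
  exact congrArg Subtype.val h

lemma isIsomSub_image_iff {s : Set W}
    (hs : ∀ a b : ↥s, (G.induce s).dist a b = G.dist ↑a ↑b) (B : Set ↥s) :
    IsIsomSub (G.induce s) B ↔ IsIsomSub G (Subtype.val '' B) := by
  set e := doubleInduceIso G s B with he
  constructor
  · rintro ⟨hc, hd⟩
    refine ⟨iso_connected e hc, fun u v => ?_⟩
    have h1 : (G.induce (Subtype.val '' B)).dist u v
        = ((G.induce s).induce B).dist (e.symm u) (e.symm v) := by
      have := iso_dist e (e.symm u) (e.symm v)
      rw [e.apply_symm_apply, e.apply_symm_apply] at this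
      exact this
    rw [h1, hd (e.symm u) (e.symm v), hs,
      doubleInduceIso_val, doubleInduceIso_val]
  · rintro ⟨hc, hd⟩
    refine ⟨iso_connected e.symm hc, fun u v => ?_⟩
    have h1 : ((G.induce s).induce B).dist u v
        = (G.induce (Subtype.val '' B)).dist (e u) (e v) := (iso_dist e u v).symm
    have h2 := hd (e u) (e v)
    rw [h1, h2, hs]
    rfl

end isos

section split
variable {W : Type*} {W' : Type*} {G : SimpleGraph W} {G' : SimpleGraph W'}

lemma dist_hom_le (f : G →g G') {u v : W} (h : G.Reachable u v) :
    G'.dist (f u) (f v) ≤ G.dist u v := by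
  obtain ⟨p, hp⟩ := h.exists_walk_length_eq_dist
  exact (dist_le (p.map f)).trans (by rw [Walk.length_map, hp])

variable {V : Type*} {K : SimpleGraph V} {sG sH : Set V} {x : V}

lemma split_lemma (hxG : x ∈ sG) (hcap : sG ∩ sH = {x})
    (hedge : ∀ u v : V, K.Adj u v → (u ∈ sG ∧ v ∈ sG) ∨ (u ∈ sH ∧ v ∈ sH))
    {A : Set V} (hxA : x ∈ A) (hA : IsIsomSub K A) : IsIsomSub K (A ∩ sG) := by
  set s' : Set ↥A := Subtype.val ⁻¹' sG with hs'
  set t' : Set ↥A := Subtype.val ⁻¹' sH with ht'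
  have hcap' : s' ∩ t' = {(⟨x, hxA⟩ : ↥A)} := by
    ext a
    simp only [hs', ht', Set.mem_inter_iff, Set.mem_preimage, Set.mem_singleton_iff,
      Subtype.ext_iff]
    rw [← Set.mem_singleton_iff, ← hcap]
    rfl
  have hedge' : ∀ a b : ↥A, (K.induce A).Adj a b →
      (a ∈ s' ∧ b ∈ s') ∨ (a ∈ t' ∧ b ∈ t') := fun a b h => hedge ↑a ↑b h
  have hpre' : (K.induce A).Preconnected := hA.1.preconnected
  have key : IsIsomSub (K.induce A) s' := by
    constructor
    · haveI : Nonempty ↥s' := ⟨⟨⟨x, hxA⟩, (hxG : (⟨x, hxA⟩ : ↥A) ∈ s')⟩⟩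
      exact Connected.mk (fun a b => by
        have := reach_induce hcap' hedge' hpre' a.2 b.2
        exact this)
    · exact dist_induce hcap' hedge' hpre'
  have := (isIsomSub_image_iff hA.2 s').mp key
  rwa [hs', Subtype.image_preimage_val] at this

end split

section combine
variable {V : Type*} {K : SimpleGraph V} {sG sH : Set V} {x : V}

lemma combine_lemma (hcap : sG ∩ sH = {x})
    (hedge : ∀ u v : V, K.Adj u v → (u ∈ sG ∧ v ∈ sG) ∨ (u ∈ sH ∧ v ∈ sH))
    (hpre : K.Preconnected)
    {BG BH : Set V} (hGsub : BG ⊆ sG) (hHsub : BH ⊆ sH)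
    (hxBG : x ∈ BG) (hxBH : x ∈ BH)
    (hBG : IsIsomSub K BG) (hBH : IsIsomSub K BH) :
    IsIsomSub K (BG ∪ BH) := by
  set U : Set V := BG ∪ BH with hU
  have hxU : x ∈ U := Or.inl hxBG
  -- an upper bound for distances in `K.induce U` via a sub-piece
  have hle : ∀ (B : Set V) (hBU : B ⊆ U) (hB : IsIsomSub K B)
      (u v : V) (hu : u ∈ B) (hv : v ∈ B),
      (K.induce U).dist ⟨u, hBU hu⟩ ⟨v, hBU hv⟩ ≤ K.dist u v := by
    intro B hBU hB u v hu hv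
    have h1 := dist_hom_le (K.induceHomOfLE hBU).toHom
      (hB.1.preconnected ⟨u, hu⟩ ⟨v, hv⟩)
    have h2 := hB.2 ⟨u, hu⟩ ⟨v, hv⟩
    exact h1.trans_eq h2
  have hreach : ∀ a : ↥U, (K.induce U).Reachable a ⟨x, hxU⟩ := by
    rintro ⟨a, ha | ha⟩
    · exact (hBG.1.preconnected ⟨a, ha⟩ ⟨x, hxBG⟩).map
        (K.induceHomOfLE (Set.subset_union_left)).toHom
    · exact (hBH.1.preconnected ⟨a, ha⟩ ⟨x, hxBH⟩).map
        (K.induceHomOfLE (Set.subset_union_right)).toHom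
  haveI : Nonempty ↥U := ⟨⟨x, hxU⟩⟩
  have hUconn : (K.induce U).Connected :=
    Connected.mk (fun a b => (hreach a).trans (hreach b).symm)
  refine ⟨hUconn, fun a b => ?_⟩
  apply le_antisymm
  · -- dist in induce U ≤ dist in K
    rcases a.2 with haG | haH <;> rcases b.2 with hbG | hbH
    · exact hle BG Set.subset_union_left hBG ↑a ↑b haG hbG
    · -- a in BG, b in BH
      calc (K.induce U).dist a b
          ≤ (K.induce U).dist a ⟨x, hxU⟩ + (K.induce U).dist ⟨x, hxU⟩ b :=
            hUconn.dist_triangle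
        _ ≤ K.dist ↑a x + K.dist x ↑b :=
            Nat.add_le_add (hle BG Set.subset_union_left hBG ↑a x haG hxBG)
              (hle BH Set.subset_union_right hBH x ↑b hxBH hbH)
        _ = K.dist ↑a ↑b := (dist_cross hcap hedge hpre (hGsub haG) (hHsub hbH)).symm
    · -- a in BH, b in BG
      have hcap' : sH ∩ sG = {x} := by rw [Set.inter_comm]; exact hcap
      have hedge' : ∀ u v : V, K.Adj u v → (u ∈ sH ∧ v ∈ sH) ∨ (u ∈ sG ∧ v ∈ sG) :=
        fun u v h => (hedge u v h).symm
      calc (K.induce U).dist a b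
          ≤ (K.induce U).dist a ⟨x, hxU⟩ + (K.induce U).dist ⟨x, hxU⟩ b :=
            hUconn.dist_triangle
        _ ≤ K.dist ↑a x + K.dist x ↑b :=
            Nat.add_le_add (hle BH Set.subset_union_right hBH ↑a x haH hxBH)
              (hle BG Set.subset_union_left hBG x ↑b hxBG hbG)
        _ = K.dist ↑a ↑b := (dist_cross hcap' hedge' hpre (hHsub haH) (hGsub hbG)).symm
    · exact hle BH Set.subset_union_right hBH ↑a ↑b haH hbH
  · -- dist in K ≤ dist in induce U
    have := dist_hom_le (Embedding.induce U).toHom (hUconn.preconnected a b)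
    exact this

end combine

/-- Let `K = G +_x H` be the union of two finite simple connected graphs
`G = K[sG]` and `H = K[sH]` whose vertex sets intersect in exactly the
vertex `x`.  Then the set of cardinalities of isometric subgraphs of
`G +_x H` containing `x` equals `{a + b - 1 : a ∈ dp^x(G), b ∈ dp^x(H)}`. -/
theorem dp_through_cut_vertex {V : Type*} [Fintype V] (K : SimpleGraph V)
    (sG sH : Set V) (x : V) (hxG : x ∈ sG) (hxH : x ∈ sH)
    (hcap : sG ∩ sH = {x}) (hcup : sG ∪ sH = Set.univ)
    (hedge : ∀ u v : V, K.Adj u v → (u ∈ sG ∧ v ∈ sG) ∨ (u ∈ sH ∧ v ∈ sH))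
    (hGconn : (K.induce sG).Connected) (hHconn : (K.induce sH).Connected) :
    dpIn K x =
      {n : ℕ | ∃ a ∈ dpIn (K.induce sG) ⟨x, hxG⟩,
        ∃ b ∈ dpIn (K.induce sH) ⟨x, hxH⟩, n = a + b - 1} := by
  -- symmetric versions of the hypotheses
  have hcap' : sH ∩ sG = {x} := by rw [Set.inter_comm]; exact hcap
  have hedge' : ∀ u v : V, K.Adj u v → (u ∈ sH ∧ v ∈ sH) ∨ (u ∈ sG ∧ v ∈ sG) :=
    fun u v h => (hedge u v h).symm
  -- K is preconnected
  have hpre : K.Preconnected := by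
    have hx : ∀ u : V, K.Reachable u x := by
      intro u
      have hu : u ∈ sG ∪ sH := hcup ▸ Set.mem_univ u
      rcases hu with hu | hu
      · exact (hGconn.preconnected ⟨u, hu⟩ ⟨x, hxG⟩).map (Embedding.induce sG).toHom
      · exact (hHconn.preconnected ⟨u, hu⟩ ⟨x, hxH⟩).map (Embedding.induce sH).toHom
    exact fun u v => (hx u).trans (hx v).symm
  have hdistG : ∀ a b : ↥sG, (K.induce sG).dist a b = K.dist ↑a ↑b :=
    dist_induce hcap hedge hpre
  have hdistH : ∀ a b : ↥sH, (K.induce sH).dist a b = K.dist ↑a ↑b :=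
    dist_induce hcap' hedge' hpre
  ext n
  simp only [dpIn, Set.mem_setOf_eq]
  constructor
  · rintro ⟨A, hxA, rfl, hA⟩
    set AG : Set ↥sG := Subtype.val ⁻¹' A with hAG
    set AH : Set ↥sH := Subtype.val ⁻¹' A with hAH
    have himgG : Subtype.val '' AG = sG ∩ A := Subtype.image_preimage_val sG A
    have himgH : Subtype.val '' AH = sH ∩ A := Subtype.image_preimage_val sH A
    have hsplitG : IsIsomSub K (A ∩ sG) := split_lemma hxG hcap hedge hxA hA
    have hsplitH : IsIsomSub K (A ∩ sH) := split_lemma hxH hcap' hedge' hxA hA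
    refine ⟨AG.ncard, ⟨AG, hxA, rfl, ?_⟩, AH.ncard, ⟨AH, hxA, rfl, ?_⟩, ?_⟩
    · exact (isIsomSub_image_iff hdistG AG).mpr
        (by rw [himgG, Set.inter_comm]; exact hsplitG)
    · exact (isIsomSub_image_iff hdistH AH).mpr
        (by rw [himgH, Set.inter_comm]; exact hsplitH)
    · -- cardinality bookkeeping
      have hcardG : AG.ncard = (A ∩ sG).ncard := by
        rw [← Set.ncard_image_of_injective AG Subtype.val_injective, himgG,
          Set.inter_comm]
      have hcardH : AH.ncard = (A ∩ sH).ncard := by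
        rw [← Set.ncard_image_of_injective AH Subtype.val_injective, himgH,
          Set.inter_comm]
      have hu : (A ∩ sG) ∪ (A ∩ sH) = A := by
        rw [← Set.inter_union_distrib_left, hcup, Set.inter_univ]
      have hi : (A ∩ sG) ∩ (A ∩ sH) = {x} := by
        ext v
        simp only [Set.mem_inter_iff, Set.mem_singleton_iff]
        constructor
        · rintro ⟨⟨hvA, hvG⟩, -, hvH⟩
          have : v ∈ sG ∩ sH := ⟨hvG, hvH⟩
          rwa [hcap, Set.mem_singleton_iff] at this
        · rintro rfl
          exact ⟨⟨hxA, hxG⟩, hxA, hxH⟩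
      have hsum := Set.ncard_union_add_ncard_inter (A ∩ sG) (A ∩ sH)
        (Set.toFinite _) (Set.toFinite _)
      rw [hu, hi, Set.ncard_singleton] at hsum
      rw [hcardG, hcardH]
      omega
  · rintro ⟨a, ⟨AG, hxAG, rfl, hAG⟩, b, ⟨AH, hxAH, rfl, hAH⟩, rfl⟩
    set BG : Set V := Subtype.val '' AG with hBG
    set BH : Set V := Subtype.val '' AH with hBH
    have hGsub : BG ⊆ sG := Subtype.coe_image_subset sG AG
    have hHsub : BH ⊆ sH := Subtype.coe_image_subset sH AH
    have hxBG : x ∈ BG := ⟨⟨x, hxG⟩, hxAG, rfl⟩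
    have hxBH : x ∈ BH := ⟨⟨x, hxH⟩, hxAH, rfl⟩
    have hBGi : IsIsomSub K BG := (isIsomSub_image_iff hdistG AG).mp hAG
    have hBHi : IsIsomSub K BH := (isIsomSub_image_iff hdistH AH).mp hAH
    refine ⟨BG ∪ BH, Or.inl hxBG, ?_, ?_⟩
    · have hi : BG ∩ BH = {x} := by
        apply Set.Subset.antisymm
        · intro v ⟨hvG, hvH⟩
          have : v ∈ sG ∩ sH := ⟨hGsub hvG, hHsub hvH⟩
          rwa [hcap] at this
        · intro v hv
          rw [Set.mem_singleton_iff] at hv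
          subst hv
          exact ⟨hxBG, hxBH⟩
      have hsum := Set.ncard_union_add_ncard_inter BG BH
        (Set.toFinite _) (Set.toFinite _)
      rw [hi, Set.ncard_singleton] at hsum
      have hag : BG.ncard = AG.ncard :=
        Set.ncard_image_of_injective AG Subtype.val_injective
      have hah : BH.ncard = AH.ncard :=
        Set.ncard_image_of_injective AH Subtype.val_injective
      omega
    · exact combine_lemma hcap hedge hpre hGsub hHsub hxBG hxBH hBGi hBHi
end

section
/- Let G and H be finite simple connected graphs whose vertex sets intersect in exactly one vertex x, and let G +_x H denote their union. Then the set of cardinalities of isometric subgraphs of G +_x H whose vertex set avoids x equals dp_x(G) ∪ dp_x(H), where dp_x(K) denotes the set of cardinalities |A| over all nonempty A ⊆ V(K) with x ∉ A such that K[A] is an isometric subgraph of K. -/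
open SimpleGraph

section Aux

variable {V : Type*} {K : SimpleGraph V} {s t : Set V} {x : V}

/-- Distances are preserved by graph isomorphisms. -/
lemma iso_dist_le {V₁ V₂ : Type*} {G₁ : SimpleGraph V₁} {G₂ : SimpleGraph V₂}
    (f : G₁ ≃g G₂) (a b : V₁) : G₂.dist (f a) (f b) ≤ G₁.dist a b := by
  by_cases h : G₁.Reachable a b
  · obtain ⟨p, hp⟩ := h.exists_walk_length_eq_dist
    calc G₂.dist (f a) (f b) ≤ (p.map f.toHom).length := SimpleGraph.dist_le _
      _ = G₁.dist a b := by rw [SimpleGraph.Walk.length_map, hp]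
  · rw [SimpleGraph.dist_eq_zero_of_not_reachable h,
      SimpleGraph.dist_eq_zero_of_not_reachable]
    rw [Iso.reachable_iff (φ := f)]
    exact h

lemma iso_dist_eq {V₁ V₂ : Type*} {G₁ : SimpleGraph V₁} {G₂ : SimpleGraph V₂}
    (f : G₁ ≃g G₂) (a b : V₁) : G₂.dist (f a) (f b) = G₁.dist a b := by
  refine le_antisymm (iso_dist_le f a b) ?_
  have := iso_dist_le f.symm (f a) (f b)
  simpa using this

/-- The isomorphism between an induced subgraph of an induced subgraph and the
corresponding induced subgraph of the big graph. -/
noncomputable def induceInduceIso (K : SimpleGraph V) (s : Set V) (A : Set s) :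
    (K.induce s).induce A ≃g K.induce (Subtype.val '' A) where
  toEquiv := Equiv.Set.image Subtype.val A Subtype.val_injective
  map_rel_iff' := Iff.rfl

lemma induceInduceIso_coe (K : SimpleGraph V) (s : Set V) (A : Set s) (w : A) :
    ((induceInduceIso K s A w : Subtype.val '' A) : V) = ((w : s) : V) := rfl

/-- If a walk in `K` starts outside `s` and ends in `s`, it passes through `x`. -/
lemma walk_hits_x (hcap : s ∩ t = {x}) (hcup : s ∪ t = Set.univ)
    (hedge : ∀ u v : V, K.Adj u v → (u ∈ s ∧ v ∈ s) ∨ (u ∈ t ∧ v ∈ t)) :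
    ∀ {a v : V} (w : K.Walk a v), a ∉ s → v ∈ s → x ∈ w.support := by
  intro a v w
  induction w with
  | nil => intro h hv; exact absurd hv h
  | @cons a b v hadj p ih =>
    intro ha hv
    by_cases hb : b ∈ s
    · rcases hedge a b hadj with ⟨h1, _⟩ | ⟨_, h2⟩
      · exact absurd h1 ha
      · have : b ∈ s ∩ t := ⟨hb, h2⟩
        rw [hcap] at this
        simp only [Set.mem_singleton_iff] at this
        subst this
        simp [SimpleGraph.Walk.support_cons, SimpleGraph.Walk.start_mem_support]
    · have := ih hb hv
      simp [SimpleGraph.Walk.support_cons, this]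

/-- Walks in `K` between vertices of `s` can be replaced by walks within `s`
which are no longer. -/
lemma project_walk (hcap : s ∩ t = {x}) (hcup : s ∪ t = Set.univ)
    (hedge : ∀ u v : V, K.Adj u v → (u ∈ s ∧ v ∈ s) ∨ (u ∈ t ∧ v ∈ t))
    (hxs : x ∈ s) :
    ∀ (n : ℕ) {u v : V} (w : K.Walk u v) (hu : u ∈ s) (hv : v ∈ s),
      w.length ≤ n →
      ∃ w' : (K.induce s).Walk ⟨u, hu⟩ ⟨v, hv⟩, w'.length ≤ w.length := by
  intro n
  induction n with
  | zero =>
    intro u v w hu hv hlen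
    cases w with
    | nil => exact ⟨SimpleGraph.Walk.nil, by simp⟩
    | cons hadj p => simp at hlen
  | succ n ih =>
    intro u v w hu hv hlen
    cases w with
    | nil => exact ⟨SimpleGraph.Walk.nil, by simp⟩
    | @cons _ b _ hadj p =>
      by_cases hb : b ∈ s
      · obtain ⟨w', hw'⟩ := ih p hb hv (by
          simp only [SimpleGraph.Walk.length_cons] at hlen; omega)
        have hadj' : (K.induce s).Adj ⟨u, hu⟩ ⟨b, hb⟩ := hadj
        refine ⟨SimpleGraph.Walk.cons hadj' w', ?_⟩
        simp only [SimpleGraph.Walk.length_cons]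
        omega
      · rcases hedge u b hadj with ⟨_, h2⟩ | ⟨h1, h2⟩
        · exact absurd h2 hb
        · classical
          have hux : x = u := by
            have hm : u ∈ s ∩ t := ⟨hu, h1⟩
            rw [hcap] at hm
            simp only [Set.mem_singleton_iff] at hm
            exact hm.symm
          subst hux
          have hxsup : x ∈ p.support := walk_hits_x hcap hcup hedge p hb hv
          have hqlen : (p.dropUntil x hxsup).length ≤ p.length :=
            SimpleGraph.Walk.length_dropUntil_le p hxsup
          obtain ⟨w', hw'⟩ := ih (p.dropUntil x hxsup) hu hv (by
            simp only [SimpleGraph.Walk.length_cons] at hlen; omega)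
          refine ⟨w', ?_⟩
          simp only [SimpleGraph.Walk.length_cons]
          omega

/-- Distances within a side agree with distances in the whole graph. -/
lemma dist_restrict (hcap : s ∩ t = {x}) (hcup : s ∪ t = Set.univ)
    (hedge : ∀ u v : V, K.Adj u v → (u ∈ s ∧ v ∈ s) ∨ (u ∈ t ∧ v ∈ t))
    (hxs : x ∈ s) (hconn : (K.induce s).Connected) (u v : s) :
    (K.induce s).dist u v = K.dist (u : V) (v : V) := by
  refine le_antisymm ?_ ?_
  · -- project a shortest K-walk into s
    have hreach : K.Reachable (u : V) (v : V) := by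
      obtain ⟨p⟩ := hconn u v
      exact ⟨p.map (SimpleGraph.Embedding.induce s).toHom⟩
    obtain ⟨p, hp⟩ := hreach.exists_walk_length_eq_dist
    obtain ⟨w', hw'⟩ := project_walk hcap hcup hedge hxs p.length p u.2 v.2 le_rfl
    calc (K.induce s).dist u v ≤ w'.length := SimpleGraph.dist_le _
      _ ≤ p.length := hw'
      _ = K.dist (u : V) (v : V) := hp
  · obtain ⟨p, hp⟩ := (hconn u v).exists_walk_length_eq_dist
    calc K.dist (u : V) (v : V)
        ≤ (p.map (SimpleGraph.Embedding.induce s).toHom).length := SimpleGraph.dist_le _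
      _ = (K.induce s).dist u v := by rw [SimpleGraph.Walk.length_map, hp]

/-- A connected set avoiding `x` containing a vertex of `s` is contained in `s`. -/
lemma subset_side (hcap : s ∩ t = {x}) (hcup : s ∪ t = Set.univ)
    (hedge : ∀ u v : V, K.Adj u v → (u ∈ s ∧ v ∈ s) ∨ (u ∈ t ∧ v ∈ t))
    {A : Set V} (hxA : x ∉ A) (hconn : (K.induce A).Connected)
    {a : V} (ha : a ∈ A) (has : a ∈ s) : A ⊆ s := by
  intro b hb
  by_contra hbs
  obtain ⟨p⟩ := hconn ⟨b, hb⟩ ⟨a, ha⟩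
  have hx : x ∈ (p.map (SimpleGraph.Embedding.induce A).toHom).support :=
    walk_hits_x hcap hcup hedge _ hbs has
  rw [SimpleGraph.Walk.support_map] at hx
  simp only [List.mem_map] at hx
  obtain ⟨c, _, hc⟩ := hx
  apply hxA
  rw [← hc]
  exact c.2

/-- Transfer of the isometric-subgraph property between a side and the whole graph. -/
lemma isIsomSub_iff (hdist : ∀ u v : s, (K.induce s).dist u v = K.dist (u : V) (v : V))
    (A : Set s) :
    IsIsomSub (K.induce s) A ↔ IsIsomSub K (Subtype.val '' A) := by
  set e := induceInduceIso K s A with he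
  have hcoe : ∀ w : A, ((e w : Subtype.val '' A) : V) = ((w : s) : V) := fun _ => rfl
  constructor
  · rintro ⟨hc, hd⟩
    refine ⟨e.connected_iff.mp hc, ?_⟩
    intro p q
    obtain ⟨u, rfl⟩ : ∃ u, e u = p := ⟨e.symm p, e.apply_symm_apply p⟩
    obtain ⟨v, rfl⟩ : ∃ v, e v = q := ⟨e.symm q, e.apply_symm_apply q⟩
    rw [iso_dist_eq e u v, hd u v, hcoe u, hcoe v, hdist (u : s) (v : s)]
  · rintro ⟨hc, hd⟩
    refine ⟨e.connected_iff.mpr hc, ?_⟩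
    intro u v
    rw [← iso_dist_eq e u v, hd (e u) (e v), hcoe u, hcoe v]
    exact (hdist (u : s) (v : s)).symm

lemma mem_dpOut_side (hdist : ∀ u v : s, (K.induce s).dist u v = K.dist (u : V) (v : V))
    (hxs : x ∈ s) {A : Set V} (hA : A ⊆ s) (hne : A.Nonempty) (hxA : x ∉ A)
    (hiso : IsIsomSub K A) : ∃ B : Set s, B.Nonempty ∧ (⟨x, hxs⟩ : s) ∉ B ∧
      B.ncard = A.ncard ∧ IsIsomSub (K.induce s) B := by
  have himg : Subtype.val '' {a : s | (a : V) ∈ A} = A := by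
    ext b
    constructor
    · rintro ⟨a, haA, rfl⟩
      exact haA
    · intro hb
      exact ⟨⟨b, hA hb⟩, hb, rfl⟩
  refine ⟨{a : s | (a : V) ∈ A}, ?_, ?_, ?_, ?_⟩
  · obtain ⟨a, ha⟩ := hne
    exact ⟨⟨a, hA ha⟩, ha⟩
  · intro hmem
    exact hxA hmem
  · rw [← Set.ncard_image_of_injective {a : s | (a : V) ∈ A} Subtype.val_injective, himg]
  · rw [isIsomSub_iff hdist, himg]
    exact hiso

lemma dpOut_side_subset (hdist : ∀ u v : s, (K.induce s).dist u v = K.dist (u : V) (v : V))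
    (hxs : x ∈ s) : dpOut (K.induce s) ⟨x, hxs⟩ ⊆ dpOut K x := by
  rintro n ⟨B, hne, hxB, hcard, hiso⟩
  refine ⟨Subtype.val '' B, hne.image _, ?_, ?_, ?_⟩
  · rintro ⟨⟨b, hbs⟩, hbB, hbx⟩
    apply hxB
    have : (⟨b, hbs⟩ : s) = ⟨x, hxs⟩ := Subtype.ext hbx
    rwa [this] at hbB
  · rw [Set.ncard_image_of_injective B Subtype.val_injective, hcard]
  · exact (isIsomSub_iff hdist B).mp hiso

end Aux

/-- Let `K = G +_x H` be the union of two finite simple connected graphs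
`G = K[sG]` and `H = K[sH]` whose vertex sets intersect in exactly the
vertex `x`.  Then the set of cardinalities of isometric subgraphs of
`G +_x H` avoiding `x` equals `dp_x(G) ∪ dp_x(H)`. -/
theorem dp_avoiding_cut_vertex {V : Type*} [Fintype V] (K : SimpleGraph V)
    (sG sH : Set V) (x : V) (hxG : x ∈ sG) (hxH : x ∈ sH)
    (hcap : sG ∩ sH = {x}) (hcup : sG ∪ sH = Set.univ)
    (hedge : ∀ u v : V, K.Adj u v → (u ∈ sG ∧ v ∈ sG) ∨ (u ∈ sH ∧ v ∈ sH))
    (hGconn : (K.induce sG).Connected) (hHconn : (K.induce sH).Connected) :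
    dpOut K x =
      dpOut (K.induce sG) ⟨x, hxG⟩ ∪ dpOut (K.induce sH) ⟨x, hxH⟩ := by
  have hcap' : sH ∩ sG = {x} := by rw [Set.inter_comm]; exact hcap
  have hcup' : sH ∪ sG = Set.univ := by rw [Set.union_comm]; exact hcup
  have hedge' : ∀ u v : V, K.Adj u v → (u ∈ sH ∧ v ∈ sH) ∨ (u ∈ sG ∧ v ∈ sG) :=
    fun u v h => (hedge u v h).symm
  have hdistG : ∀ u v : sG, (K.induce sG).dist u v = K.dist (u : V) (v : V) :=
    dist_restrict hcap hcup hedge hxG hGconn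
  have hdistH : ∀ u v : sH, (K.induce sH).dist u v = K.dist (u : V) (v : V) :=
    dist_restrict hcap' hcup' hedge' hxH hHconn
  apply Set.Subset.antisymm
  · rintro n ⟨A, hne, hxA, hcard, hiso⟩
    obtain ⟨a, ha⟩ := hne
    by_cases has : a ∈ sG
    · have hAsub : A ⊆ sG := subset_side hcap hcup hedge hxA hiso.1 ha has
      obtain ⟨B, h1, h2, h3, h4⟩ := mem_dpOut_side hdistG hxG hAsub ⟨a, ha⟩ hxA hiso
      exact Or.inl ⟨B, h1, h2, by rw [h3, hcard], h4⟩
    · have hat : a ∈ sH := by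
        have hmem : a ∈ sG ∪ sH := by rw [hcup]; trivial
        exact hmem.resolve_left has
      have hAsub : A ⊆ sH := subset_side hcap' hcup' hedge' hxA hiso.1 ha hat
      obtain ⟨B, h1, h2, h3, h4⟩ := mem_dpOut_side hdistH hxH hAsub ⟨a, ha⟩ hxA hiso
      exact Or.inr ⟨B, h1, h2, by rw [h3, hcard], h4⟩
  · rintro n (hn | hn)
    · exact dpOut_side_subset hdistG hxG hn
    · exact dpOut_side_subset hdistH hxH hn
end

section
/- Let k and ℓ be positive integers and let G be a graph in the family 𝒞_{k,ℓ}, with C(G) denoting its original cycle vertices. Then the subgraph of G induced on C(G) is an isometric subgraph of G; that is, for every pair of cycle vertices u, v ∈ C(G), the distance between u and v in G equals their distance in the cycle C_k. -/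
open SimpleGraph

/-- `G` belongs to the family `𝒞_{k,ℓ}`: the cycle vertices `Sum.inl i`
induce the cycle `C_k`, the `ℓ` added vertices `Sum.inr a` form an
independent set, and each added vertex is joined to at least one cycle
vertex, all its cycle neighbours lying among three consecutive cycle
vertices `v_{i-1}, v_i, v_{i+1}` (indices mod `k`). -/
def MemCkl (k l : ℕ) (G : SimpleGraph (Fin k ⊕ Fin l)) : Prop :=
  (∀ i j : Fin k, G.Adj (Sum.inl i) (Sum.inl j) ↔ (cycleGraph k).Adj i j) ∧
  (∀ a b : Fin l, ¬ G.Adj (Sum.inr a) (Sum.inr b)) ∧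
  (∀ a : Fin l,
    (∃ j : Fin k, G.Adj (Sum.inr a) (Sum.inl j)) ∧
    ∃ i : Fin k, ∀ j : Fin k, G.Adj (Sum.inr a) (Sum.inl j) →
      ((j : ℕ) + 1) % k = (i : ℕ) ∨ j = i ∨ ((i : ℕ) + 1) % k = (j : ℕ))

/-- Push a walk forward along a map that sends edges to edges-or-equal vertices. -/
lemma walk_push {V W : Type*} {G : SimpleGraph V} {H : SimpleGraph W} (f : V → W)
    (hf : ∀ ⦃u v⦄, G.Adj u v → f u = f v ∨ H.Adj (f u) (f v)) :
    ∀ {u v : V} (p : G.Walk u v), ∃ q : H.Walk (f u) (f v), q.length ≤ p.length := by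
  intro u v p
  induction p with
  | nil => exact ⟨SimpleGraph.Walk.nil, le_rfl⟩
  | cons h p ih =>
    obtain ⟨q, hq⟩ := ih
    rcases hf h with he | ha
    · exact ⟨q.copy he.symm rfl, by simpa using Nat.le_succ_of_le hq⟩
    · exact ⟨SimpleGraph.Walk.cons ha q, by simpa using hq⟩

lemma dist_le_of_hom {V W : Type*} {G : SimpleGraph V} {H : SimpleGraph W} (φ : G →g H)
    {u v : V} (h : G.Reachable u v) : H.dist (φ u) (φ v) ≤ G.dist u v := by
  obtain ⟨p, hp⟩ := h.exists_walk_length_eq_dist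
  calc H.dist (φ u) (φ v) ≤ (p.map φ).length := SimpleGraph.dist_le _
    _ = p.length := SimpleGraph.Walk.length_map _ _
    _ = G.dist u v := hp

/-- If `i` and `j` lie within a window of three consecutive cycle vertices centred
suitably, then they are equal or adjacent in the cycle graph. -/
lemma window_adj {k : ℕ} (i j : Fin k)
    (h : ((j : ℕ) + 1) % k = (i : ℕ) ∨ j = i ∨ ((i : ℕ) + 1) % k = (j : ℕ)) :
    i = j ∨ (cycleGraph k).Adj i j := by
  match k with
  | 0 => exact i.elim0
  | 1 => exact Or.inl (Subsingleton.elim i j)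
  | (n + 2) =>
    rcases h with h | h | h
    · right
      rw [cycleGraph_adj]
      left
      have hij : i = j + 1 := by
        apply Fin.ext
        rw [Fin.add_def]
        simpa using h.symm
      rw [hij, add_sub_cancel_left]
    · exact Or.inl h.symm
    · right
      rw [cycleGraph_adj]
      right
      have hji : j = i + 1 := by
        apply Fin.ext
        rw [Fin.add_def]
        simpa using h.symm
      rw [hji, add_sub_cancel_left]

lemma cycleGraph_connected' {k : ℕ} (hk : 0 < k) : (cycleGraph k).Connected := by
  match k with
  | 1 =>
    rw [connected_iff]
    exact ⟨fun u v => by rw [Subsingleton.elim u v], ⟨0⟩⟩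
  | (n + 2) =>
    rw [connected_iff]
    have key : ∀ m (hm : m < n + 2), (cycleGraph (n + 2)).Reachable ⟨0, by omega⟩ ⟨m, hm⟩ := by
      intro m
      induction m with
      | zero => exact fun _ => Reachable.refl _
      | succ m ih =>
        intro hn
        have hm : m < n + 2 := Nat.lt_of_succ_lt hn
        refine (ih hm).trans (SimpleGraph.Adj.reachable ?_)
        rw [cycleGraph_adj]
        right
        have hsucc : (⟨m + 1, hn⟩ : Fin (n + 2)) = ⟨m, hm⟩ + 1 := by
          apply Fin.ext
          simp [Fin.add_def, Nat.mod_eq_of_lt hn]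
        rw [hsucc, add_sub_cancel_left]
    refine ⟨fun u v => ?_, ⟨0⟩⟩
    have hu := key u.val u.isLt
    have hv := key v.val v.isLt
    simp only [Fin.eta] at hu hv
    exact hu.symm.trans hv

/-- For any `G ∈ 𝒞_{k,ℓ}`, the subgraph induced on the original cycle
vertices `C(G)` is an isometric subgraph of `G`; that is, the distance in
`G` between any two cycle vertices equals their distance in the cycle
`C_k`. -/
theorem ckl_cycle_isometric (k l : ℕ) (hk : 0 < k) (hl : 0 < l)
    (G : SimpleGraph (Fin k ⊕ Fin l)) (hG : MemCkl k l G) :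
    IsIsomSub G (Set.range Sum.inl) ∧
      ∀ i j : Fin k,
        G.dist (Sum.inl i) (Sum.inl j) = (cycleGraph k).dist i j := by
  classical
  obtain ⟨h1, h2, h3⟩ := hG
  set ctr : Fin l → Fin k := fun a => Classical.choose (h3 a).2 with hctr
  have hctr_spec : ∀ a j, G.Adj (Sum.inr a) (Sum.inl j) →
      ((j : ℕ) + 1) % k = (ctr a : ℕ) ∨ j = ctr a ∨ ((ctr a : ℕ) + 1) % k = (j : ℕ) :=
    fun a => Classical.choose_spec (h3 a).2
  set f : Fin k ⊕ Fin l → Fin k := Sum.elim id ctr with hfdef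
  have hf : ∀ ⦃u v⦄, G.Adj u v → f u = f v ∨ (cycleGraph k).Adj (f u) (f v) := by
    rintro (i | a) (j | b) h
    · exact Or.inr ((h1 i j).mp h)
    · rcases window_adj (ctr b) i (hctr_spec b i h.symm) with he | ha
      · exact Or.inl he.symm
      · exact Or.inr ha.symm
    · rcases window_adj (ctr a) j (hctr_spec a j h) with he | ha
      · exact Or.inl he
      · exact Or.inr ha
    · exact absurd h (h2 a b)
  have hcyc : (cycleGraph k).Connected := cycleGraph_connected' hk
  let φ : cycleGraph k →g G := ⟨Sum.inl, fun h => (h1 _ _).mpr h⟩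
  have reach : ∀ i j : Fin k, G.Reachable (Sum.inl i) (Sum.inl j) :=
    fun i j => (hcyc i j).map φ
  have dist_eq : ∀ i j : Fin k, G.dist (Sum.inl i) (Sum.inl j) = (cycleGraph k).dist i j := by
    intro i j
    refine le_antisymm (dist_le_of_hom φ (hcyc i j)) ?_
    obtain ⟨p, hp⟩ := (reach i j).exists_walk_length_eq_dist
    obtain ⟨q, hq⟩ := walk_push f hf p
    calc (cycleGraph k).dist i j ≤ q.length := SimpleGraph.dist_le _
      _ ≤ p.length := hq
      _ = _ := hp
  refine ⟨⟨?_, ?_⟩, dist_eq⟩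
  · -- connectedness of the induced subgraph
    have e : cycleGraph k ≃g G.induce (Set.range (Sum.inl : Fin k → Fin k ⊕ Fin l)) :=
      { toEquiv := Equiv.ofInjective Sum.inl Sum.inl_injective
        map_rel_iff' := by
          intro i j
          simpa using (h1 i j) }
    exact hcyc.map e.toHom e.toEquiv.surjective
  · rintro ⟨_, i, rfl⟩ ⟨_, j, rfl⟩
    set A := Set.range (Sum.inl : Fin k → Fin k ⊕ Fin l) with hA
    have hmemi : Sum.inl i ∈ A := ⟨i, rfl⟩
    have hmemj : Sum.inl j ∈ A := ⟨j, rfl⟩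
    let e : cycleGraph k ≃g G.induce A :=
      { toEquiv := Equiv.ofInjective Sum.inl Sum.inl_injective
        map_rel_iff' := by
          intro i j
          exact h1 i j }
    have hei : e.toHom i = (⟨Sum.inl i, hmemi⟩ : A) := rfl
    have hej : e.toHom j = (⟨Sum.inl j, hmemj⟩ : A) := rfl
    let hval : (G.induce A) →g G := ⟨Subtype.val, fun h => h⟩
    have h1' : (G.induce A).dist ⟨Sum.inl i, hmemi⟩ ⟨Sum.inl j, hmemj⟩ ≤ (cycleGraph k).dist i j := by
      have := dist_le_of_hom e.toHom (hcyc i j)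
      rwa [hei, hej] at this
    have hreach : (G.induce A).Reachable ⟨Sum.inl i, hmemi⟩ ⟨Sum.inl j, hmemj⟩ := by
      have := (hcyc i j).map e.toHom
      rwa [hei, hej] at this
    have h2' : G.dist (Sum.inl i) (Sum.inl j) ≤
        (G.induce A).dist ⟨Sum.inl i, hmemi⟩ ⟨Sum.inl j, hmemj⟩ :=
      dist_le_of_hom hval hreach
    have := dist_eq i j
    show (G.induce A).dist ⟨Sum.inl i, hmemi⟩ ⟨Sum.inl j, hmemj⟩ = G.dist (Sum.inl i) (Sum.inl j)
    omega
end

section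
/- Let k ≥ 5 and let t be an integer with ⌊k/2⌋ + 2 < t < k. Then the cycle graph C_k has no isometric subgraph on exactly t vertices; consequently, C_k is not distance preserving for every k ≥ 5. -/
open SimpleGraph
open scoped Fin.NatCast Fin.CommRing

/-- `G` is distance preserving: it has an isometric subgraph of every order
`1 ≤ i ≤ |V(G)|`. -/
def DistPres {V : Type*} [Fintype V] (G : SimpleGraph V) : Prop :=
  ∀ i : ℕ, 1 ≤ i → i ≤ Fintype.card V →
    ∃ A : Set V, A.ncard = i ∧ IsIsomSub G A

/-- `val` of `c + 1` in `Fin k`. -/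
lemma fin_val_add_one {k : ℕ} [NeZero k] (hk : 2 ≤ k) (c : Fin k) :
    ((c + 1 : Fin k) : ℕ) = (c.val + 1) % k := by
  rw [Fin.add_def]
  show (c.val + ((1 : Fin k) : ℕ)) % k = _
  rw [Fin.val_one', Nat.mod_eq_of_lt (show (1 : ℕ) < k by omega)]

/-- Going around the cycle by `d` steps gives a walk of length `d`. -/
lemma cycle_dist_add_le {k : ℕ} [NeZero k] (hk : 2 ≤ k) (u : Fin k) (d : ℕ) :
    (cycleGraph k).dist u (u + (d : Fin k)) ≤ d := by
  have hconn : (cycleGraph k).Connected := by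
    obtain ⟨n, rfl⟩ : ∃ n, k = n + 1 := ⟨k - 1, by omega⟩
    exact cycleGraph_connected
  induction d with
  | zero => simp
  | succ d ih =>
    have hone : ((1 : Fin k) : ℕ) = 1 := by
      rw [Fin.val_one']; exact Nat.mod_eq_of_lt (by omega)
    have hadj : (cycleGraph k).Adj (u + (d : Fin k)) (u + ((d + 1 : ℕ) : Fin k)) := by
      rw [cycleGraph_adj']
      right
      have h1 : (u + ((d + 1 : ℕ) : Fin k)) - (u + (d : Fin k)) = 1 := by
        push_cast; ring
      rw [h1, hone]
    calc (cycleGraph k).dist u (u + ((d + 1 : ℕ) : Fin k))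
        ≤ (cycleGraph k).dist u (u + (d : Fin k)) +
            (cycleGraph k).dist (u + (d : Fin k)) (u + ((d + 1 : ℕ) : Fin k)) :=
          hconn.dist_triangle
      _ ≤ d + 1 := by
          have := (SimpleGraph.dist_eq_one_iff_adj).mpr hadj
          omega

/-- Core lemma: no isometric subgraph of order `t` when `k/2 + 2 ≤ t < k`. -/
lemma cycle_core (k t : ℕ) (hk : 5 ≤ k) (ht₁ : k / 2 + 2 ≤ t) (ht₂ : t < k) :
    ¬ ∃ A : Set (Fin k), A.ncard = t ∧ IsIsomSub (cycleGraph k) A := by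
  haveI : NeZero k := ⟨by omega⟩
  classical
  rintro ⟨A, hcard, hconn, hdist⟩
  have ht2 : 2 ≤ t := by omega
  -- pick a vertex outside A
  obtain ⟨w, hw⟩ : ∃ w : Fin k, w ∉ A := by
    by_contra h
    push_neg at h
    have hA : A = Set.univ := Set.eq_univ_of_forall h
    rw [hA, Set.ncard_univ, Nat.card_eq_fintype_card, Fintype.card_fin] at hcard
    omega
  set f : Fin k → ℕ := fun x => (x - (w + 1)).val with hfdef
  have hone : ((1 : Fin k) : ℕ) = 1 := by
    rw [Fin.val_one']; exact Nat.mod_eq_of_lt (by omega)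
  have hnegone : ((-1 : Fin k) : ℕ) = k - 1 := by
    rw [Fin.neg_def]
    simp only [hone]
    exact Nat.mod_eq_of_lt (by omega)
  have finj : Function.Injective f := by
    intro x y h
    have h' : x - (w + 1) = y - (w + 1) := Fin.val_injective h
    have := congrArg (· + (w + 1)) h'
    simpa [sub_add_cancel] using this
  have hfx : ∀ x ∈ A, f x ≤ k - 2 := by
    intro x hx
    have hlt : f x < k := (x - (w + 1)).isLt
    by_contra hcon
    have hfk : f x = k - 1 := by omega
    have : x - (w + 1) = (-1 : Fin k) := Fin.val_injective
      (by show f x = ((-1 : Fin k) : ℕ); rw [hnegone]; exact hfk)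
    have hxw : x = w := by
      have := sub_eq_iff_eq_add.mp this
      rw [this]; ring
    exact hw (hxw ▸ hx)
  -- adjacency step lemma
  have step : ∀ x y : Fin k, x ∈ A → y ∈ A → (cycleGraph k).Adj x y →
      f x = f y + 1 ∨ f y = f x + 1 := by
    have key : ∀ a b : Fin k, (a - b).val = 1 → a ∈ A → b ∈ A → f a = f b + 1 := by
      intro a b hab ha hb
      have h1 : a - b = 1 := Fin.val_injective (by rw [hab, hone])
      have h2 : a = b + 1 := by
        have := sub_eq_iff_eq_add.mp h1; rw [this]; ring
      have h3 : a - (w + 1) = (b - (w + 1)) + 1 := by rw [h2]; ring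
      have h4 : f a = (f b + 1) % k := by
        show (a - (w + 1)).val = _
        rw [h3]
        exact fin_val_add_one (by omega) _
      have hbk := hfx b hb
      rw [Nat.mod_eq_of_lt (by omega)] at h4
      exact h4
    intro x y hx hy hadj
    rw [cycleGraph_adj'] at hadj
    rcases hadj with h | h
    · exact Or.inl (key x y h hx hy)
    · exact Or.inr (key y x h hy hx)
  -- adjacency in the induced graph
  have step' : ∀ u v : A, ((cycleGraph k).induce A).Adj u v →
      f u = f v + 1 ∨ f v = f u + 1 := by
    intro u v h
    exact step u v u.2 v.2 h
  -- finset setup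
  let F : Finset (Fin k) := A.toFinset
  have hmemF : ∀ x, x ∈ F ↔ x ∈ A := fun x => Set.mem_toFinset
  have hFcard : F.card = t := by
    rw [← hcard, Set.ncard_eq_toFinset_card']
  have hFne : F.Nonempty := Finset.card_pos.mp (by omega)
  let I : Finset ℕ := F.image f
  have hIcard : I.card = t := by
    rw [Finset.card_image_of_injective _ finj, hFcard]
  have hIne : I.Nonempty := hFne.image f
  obtain ⟨a, haF, hfa⟩ := Finset.mem_image.mp (I.min'_mem hIne)
  obtain ⟨b, hbF, hfb⟩ := Finset.mem_image.mp (I.max'_mem hIne)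
  have haA : a ∈ A := (hmemF a).mp haF
  have hbA : b ∈ A := (hmemF b).mp hbF
  -- intermediate value along walks
  have ivt : ∀ (u v : A) (p : ((cycleGraph k).induce A).Walk u v) (m : ℕ),
      min (f u) (f v) ≤ m → m ≤ max (f u) (f v) → ∃ z, z ∈ A ∧ f z = m := by
    intro u v p
    induction p with
    | nil =>
      rename_i u'
      intro m h1 h2
      exact ⟨u', u'.2, by omega⟩
    | @cons u' x v' h q ih =>
      intro m h1 h2
      by_cases hm : min (f x) (f v') ≤ m ∧ m ≤ max (f x) (f v')
      · exact ih m hm.1 hm.2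
      · have hs := step' u' x h
        push_neg at hm
        exact ⟨u', u'.2, by omega⟩
  -- walk length bound
  have len : ∀ (u v : A) (p : ((cycleGraph k).induce A).Walk u v),
      f v ≤ f u + p.length ∧ f u ≤ f v + p.length := by
    intro u v p
    induction p with
    | nil => simp
    | @cons u' x v' h q ih =>
      have hs := step' u' x h
      simp only [SimpleGraph.Walk.length_cons]
      omega
  -- reachability
  have hr : ((cycleGraph k).induce A).Reachable ⟨a, haA⟩ ⟨b, hbA⟩ :=
    hconn.preconnected _ _
  -- I = Icc min' max'
  have hIcc : I = Finset.Icc (I.min' hIne) (I.max' hIne) := by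
    apply Finset.Subset.antisymm
    · intro m hm
      rw [Finset.mem_Icc]
      exact ⟨I.min'_le m hm, I.le_max' m hm⟩
    · intro m hm
      rw [Finset.mem_Icc] at hm
      obtain ⟨p⟩ := hr
      obtain ⟨z, hzA, hfz⟩ := ivt _ _ p m (by simp only [hfa, hfb]; omega)
        (by simp only [hfa, hfb]; omega)
      exact Finset.mem_image.mpr ⟨z, (hmemF z).mpr hzA, hfz⟩
  have hminmax : I.max' hIne - I.min' hIne = t - 1 ∧ I.min' hIne ≤ I.max' hIne := by
    have hle : I.min' hIne ≤ I.max' hIne := I.min'_le _ (I.max'_mem hIne)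
    have := hIcard
    rw [hIcc, Nat.card_Icc] at this
    omega
  have hfab : f b - f a = t - 1 ∧ f a < f b := by
    rw [hfa, hfb]
    omega
  -- lower bound on cycle distance
  have hdeq := hdist ⟨a, haA⟩ ⟨b, hbA⟩
  obtain ⟨p, hplen⟩ := hr.exists_walk_length_eq_dist
  have hlow : t - 1 ≤ (cycleGraph k).dist a b := by
    have hl : f b ≤ f a + p.length := (len _ _ p).1
    have hl2 : p.length = (cycleGraph k).dist a b := by rw [hplen]; exact hdeq
    omega
  -- upper bound on cycle distance
  have hba : (b - a).val = t - 1 := by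
    have h1 : b - a = (b - (w + 1)) - (a - (w + 1)) := by ring
    rw [h1, Fin.sub_def]
    have hak : f a < k := (a - (w + 1)).isLt
    have hbk : f b < k := (b - (w + 1)).isLt
    show (k - f a + f b) % k = t - 1
    have h2 : k - f a + f b = k + (f b - f a) := by omega
    rw [h2, Nat.add_mod_left, Nat.mod_eq_of_lt (by omega)]
    omega
  have hab : (a - b).val = k - (t - 1) := by
    have h1 : a - b = -(b - a) := by ring
    rw [h1, Fin.neg_def]
    show (k - (b - a).val) % k = k - (t - 1)
    rw [hba]
    exact Nat.mod_eq_of_lt (by omega)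
  have hup : (cycleGraph k).dist a b ≤ k - (t - 1) := by
    have h1 := cycle_dist_add_le (by omega) b ((a - b).val)
    have h2 : (((a - b).val : ℕ) : Fin k) = a - b := Fin.cast_val_eq_self _
    rw [h2] at h1
    have h3 : b + (a - b) = a := by ring
    rw [h3, hab] at h1
    rw [SimpleGraph.dist_comm]
    exact h1
  omega

/-- Let `k ≥ 5` and let `t` satisfy `⌊k/2⌋ + 2 < t < k`.  Then the cycle
`C_k` has no isometric subgraph on exactly `t` vertices; consequently `C_m`
is not distance preserving for every `m ≥ 5`. -/
theorem cycle_no_isometric_subgraph (k t : ℕ) (hk : 5 ≤ k)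
    (ht₁ : k / 2 + 2 < t) (ht₂ : t < k) :
    (¬ ∃ A : Set (Fin k), A.ncard = t ∧ IsIsomSub (cycleGraph k) A) ∧
      ∀ m : ℕ, 5 ≤ m → ¬ DistPres (cycleGraph m) := by
  constructor
  · exact cycle_core k t hk (by omega) ht₂
  · intro m hm hDP
    have h := hDP (m - 1) (by omega) (by rw [Fintype.card_fin]; omega)
    exact cycle_core m (m - 1) hm (by omega) (by omega) h
end
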